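/- arXiv:2401.16417 — 7 statements merged into one kernel-verified Lean document; each statement's English description precedes it below -/
import Mathlib

section
/- For any real-valued random variable X (on a probability space), the limit as x → ∞ of (1/x)·log E[Φ(X − x)] + x/2 equals the essential supremum of X, where Φ is the standard Gaussian CDF. (If the essential supremum is +∞, the limit is +∞.) -/
open MeasureTheory Filter

/-- Standard Gaussian density. -/
noncomputable def gaussPDF (x : ℝ) : ℝ := Real.exp (-(x ^ 2) / 2) / Real.sqrt (2 * Real.pi)

/-- Standard Gaussian CDF. -/
noncomputable def gaussCDF (x : ℝ) : ℝ := ∫ t in Set.Iic x, gaussPDF t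

lemma gaussPDF_pos (x : ℝ) : 0 < gaussPDF x := by
  unfold gaussPDF
  positivity

lemma gaussPDF_eq (x : ℝ) : gaussPDF x = Real.exp (-(1/2) * x ^ 2) / Real.sqrt (2 * Real.pi) := by
  unfold gaussPDF; ring_nf

lemma integrable_gaussPDF : Integrable gaussPDF := by
  have h := (integrable_exp_neg_mul_sq (by norm_num : (0:ℝ) < 1/2)).div_const (Real.sqrt (2 * Real.pi))
  exact h.congr (by filter_upwards with x using by rw [gaussPDF_eq])

lemma integral_gaussPDF : ∫ x, gaussPDF x = 1 := by
  have h : ∫ x, Real.exp (-(1/2) * x ^ 2) = Real.sqrt (Real.pi / (1/2)) := integral_gaussian (1/2)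
  have : ∫ x, gaussPDF x = (∫ x, Real.exp (-(1/2) * x ^ 2)) / Real.sqrt (2 * Real.pi) := by
    rw [← integral_div]; congr 1; ext x; rw [gaussPDF_eq]
  rw [this, h]
  rw [div_eq_one_iff_eq (by positivity)]
  congr 1; ring

lemma gaussCDF_nonneg (x : ℝ) : 0 ≤ gaussCDF x :=
  setIntegral_nonneg measurableSet_Iic (fun t _ => (gaussPDF_pos t).le)

lemma gaussCDF_le_one (x : ℝ) : gaussCDF x ≤ 1 := by
  rw [← integral_gaussPDF]
  exact setIntegral_le_integral integrable_gaussPDF (by filter_upwards with t using (gaussPDF_pos t).le)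

lemma gaussCDF_pos (x : ℝ) : 0 < gaussCDF x := by
  rw [gaussCDF, setIntegral_pos_iff_support_of_nonneg_ae
    (by filter_upwards with t using (gaussPDF_pos t).le) (integrable_gaussPDF.integrableOn)]
  have : Function.support gaussPDF = Set.univ := by
    ext t; simp [Function.support, (gaussPDF_pos t).ne']
  rw [this, Set.univ_inter]
  simp [Real.volume_Iic]

lemma gaussCDF_mono : Monotone gaussCDF := by
  intro a b hab
  exact setIntegral_mono_set integrable_gaussPDF.integrableOn
    (by filter_upwards with t using (gaussPDF_pos t).le)
    (HasSubset.Subset.eventuallyLE (Set.Iic_subset_Iic.2 hab))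

lemma gaussCDF_le_exp {t : ℝ} (ht : 0 ≤ t) : gaussCDF (-t) ≤ Real.exp (-t^2/2) := by
  have key : ∀ s ∈ Set.Iic (-t), gaussPDF s ≤ Real.exp (-t^2/2) * gaussPDF (s + t) := by
    intro s hs
    simp only [Set.mem_Iic] at hs
    unfold gaussPDF
    rw [mul_div_assoc', div_le_div_iff_of_pos_right (by positivity), ← Real.exp_add]
    apply Real.exp_le_exp.2
    nlinarith [mul_nonneg ht (neg_nonneg.2 (by linarith : s + t ≤ 0) : (0:ℝ) ≤ -(s+t))]
  calc gaussCDF (-t) ≤ ∫ s in Set.Iic (-t), Real.exp (-t^2/2) * gaussPDF (s + t) := by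
        apply setIntegral_mono_on integrable_gaussPDF.integrableOn
          (((integrable_gaussPDF.comp_add_right t).const_mul _).integrableOn) measurableSet_Iic key
    _ ≤ ∫ s, Real.exp (-t^2/2) * gaussPDF (s + t) := by
        apply setIntegral_le_integral ((integrable_gaussPDF.comp_add_right t).const_mul _)
        filter_upwards with s using mul_nonneg (Real.exp_nonneg _) (gaussPDF_pos _).le
    _ = Real.exp (-t^2/2) := by
        rw [integral_const_mul, integral_add_right_eq_self gaussPDF t, integral_gaussPDF]
        ring

lemma gaussCDF_ge {y ε : ℝ} (hy : y ≤ 0) (hε : 0 < ε) : ε * gaussPDF (y - ε) ≤ gaussCDF y := by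
  have h1 : ∀ s ∈ Set.Ioc (y - ε) y, gaussPDF (y - ε) ≤ gaussPDF s := by
    intro s hs
    obtain ⟨h2, h3⟩ := hs
    unfold gaussPDF
    rw [div_le_div_iff_of_pos_right (by positivity)]
    apply Real.exp_le_exp.2
    nlinarith
  calc ε * gaussPDF (y - ε) = ∫ _ in Set.Ioc (y - ε) y, gaussPDF (y - ε) := by
        rw [setIntegral_const, measureReal_def, Real.volume_Ioc, smul_eq_mul,
          ENNReal.toReal_ofReal (by linarith : (0:ℝ) ≤ y - (y - ε))]
        ring_nf
    _ ≤ ∫ s in Set.Ioc (y - ε) y, gaussPDF s := by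
        apply setIntegral_mono_on (integrableOn_const (by simp [Real.volume_Ioc]))
          integrable_gaussPDF.integrableOn measurableSet_Ioc h1
    _ ≤ gaussCDF y := by
        apply setIntegral_mono_set integrable_gaussPDF.integrableOn
          (by filter_upwards with t using (gaussPDF_pos t).le)
          (HasSubset.Subset.eventuallyLE (fun s hs => hs.2))

lemma aux_tendsto (K a : ℝ) :
    Tendsto (fun x : ℝ => (1/x) * (K - (x - a)^2/2) + x/2) atTop (nhds a) := by
  have h : Tendsto (fun x : ℝ => (K - a^2/2) * x⁻¹ + a) atTop (nhds a) := by
    have h0 := (tendsto_inv_atTop_zero (𝕜 := ℝ)).const_mul (K - a^2/2)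
    simpa using h0.add_const a
  apply h.congr'
  filter_upwards [eventually_gt_atTop 0] with x hx
  field_simp
  ring

section Main

variable {Ω : Type*} [MeasurableSpace Ω] (μ : Measure Ω) [IsProbabilityMeasure μ]
  (X : Ω → ℝ) (hX : Measurable X)
include hX

lemma integrable_gcdf (x : ℝ) : Integrable (fun ω => gaussCDF (X ω - x)) μ := by
  apply Integrable.mono' (integrable_const (1:ℝ))
  · exact (gaussCDF_mono.measurable.comp ((hX.sub measurable_const))).aestronglyMeasurable
  · filter_upwards with ω
    rw [Real.norm_eq_abs, abs_of_nonneg (gaussCDF_nonneg _)]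
    exact gaussCDF_le_one _

lemma integral_gcdf_pos (x : ℝ) : 0 < ∫ ω, gaussCDF (X ω - x) ∂μ := by
  rw [integral_pos_iff_support_of_nonneg_ae
    (by filter_upwards with ω using gaussCDF_nonneg _) (integrable_gcdf μ X hX x)]
  have : Function.support (fun ω => gaussCDF (X ω - x)) = Set.univ := by
    ext ω; simp [Function.support, (gaussCDF_pos (X ω - x)).ne']
  rw [this]
  simp

lemma integral_gcdf_lower (m' x : ℝ) :
    (μ {ω | m' ≤ X ω}).toReal * gaussCDF (m' - x) ≤ ∫ ω, gaussCDF (X ω - x) ∂μ := by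
  have hs : MeasurableSet {ω | m' ≤ X ω} := hX measurableSet_Ici
  calc (μ {ω | m' ≤ X ω}).toReal * gaussCDF (m' - x)
      = ∫ _ in {ω | m' ≤ X ω}, gaussCDF (m' - x) ∂μ := by
        rw [setIntegral_const, smul_eq_mul, measureReal_def]
    _ ≤ ∫ ω in {ω | m' ≤ X ω}, gaussCDF (X ω - x) ∂μ := by
        apply setIntegral_mono_on (integrableOn_const (measure_lt_top μ _).ne)
          ((integrable_gcdf μ X hX x).integrableOn) hs
        intro ω hω
        exact gaussCDF_mono (by simpa using sub_le_sub_right (Set.mem_setOf.1 hω) x)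
    _ ≤ ∫ ω, gaussCDF (X ω - x) ∂μ := by
        apply setIntegral_le_integral (integrable_gcdf μ X hX x)
        filter_upwards with ω using gaussCDF_nonneg _

lemma integral_gcdf_upper {c : ℝ} (hc : ∀ᵐ ω ∂μ, X ω ≤ c) (x : ℝ) :
    ∫ ω, gaussCDF (X ω - x) ∂μ ≤ gaussCDF (c - x) := by
  calc ∫ ω, gaussCDF (X ω - x) ∂μ ≤ ∫ _, gaussCDF (c - x) ∂μ := by
        apply integral_mono_ae (integrable_gcdf μ X hX x) (integrable_const _)
        filter_upwards [hc] with ω hω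
        exact gaussCDF_mono (by linarith)
    _ = gaussCDF (c - x) := by simp

lemma lower_event {m m' ε : ℝ} (hε : 0 < ε) (hp : 0 < μ {ω | m' ≤ X ω})
    (hm : m < m' - ε) :
    ∀ᶠ x in atTop, m < (1/x) * Real.log (∫ ω, gaussCDF (X ω - x) ∂μ) + x/2 := by
  set p : ℝ := (μ {ω | m' ≤ X ω}).toReal with hpdef
  have hp' : 0 < p := ENNReal.toReal_pos hp.ne' (measure_lt_top μ _).ne
  set K : ℝ := Real.log (p * ε / Real.sqrt (2 * Real.pi)) with hK
  have htd := aux_tendsto K (m' - ε)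
  filter_upwards [htd.eventually (eventually_gt_nhds hm),
    eventually_ge_atTop (max 1 m')] with x hx1 hx2
  have hx0 : (1:ℝ) ≤ x := le_trans (le_max_left _ _) hx2
  have hxm : m' ≤ x := le_trans (le_max_right _ _) hx2
  refine hx1.trans_le ?_
  -- lower bound the integral
  have hlow : p * (ε * gaussPDF (m' - x - ε)) ≤ ∫ ω, gaussCDF (X ω - x) ∂μ := by
    refine le_trans ?_ (integral_gcdf_lower μ X hX m' x)
    exact mul_le_mul_of_nonneg_left (gaussCDF_ge (by linarith) hε) hp'.le
  have hposl : 0 < p * (ε * gaussPDF (m' - x - ε)) := by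
    have := gaussPDF_pos (m' - x - ε); positivity
  have hlog : Real.log (p * (ε * gaussPDF (m' - x - ε)))
      ≤ Real.log (∫ ω, gaussCDF (X ω - x) ∂μ) := Real.log_le_log hposl hlow
  have hlogeq : Real.log (p * (ε * gaussPDF (m' - x - ε))) = K - (x - (m' - ε))^2/2 := by
    have hC : (0:ℝ) < Real.sqrt (2 * Real.pi) := by positivity
    rw [← mul_assoc]
    unfold gaussPDF
    rw [mul_div_assoc', Real.log_div (by positivity) hC.ne', Real.log_mul (by positivity) (Real.exp_pos _).ne',
      Real.log_exp, hK, Real.log_div (by positivity) hC.ne']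
    ring_nf
  calc (1/x) * (K - (x - (m' - ε))^2/2) + x/2
      = (1/x) * Real.log (p * (ε * gaussPDF (m' - x - ε))) + x/2 := by rw [hlogeq]
    _ ≤ (1/x) * Real.log (∫ ω, gaussCDF (X ω - x) ∂μ) + x/2 := by
        have : (0:ℝ) ≤ 1/x := by positivity
        nlinarith [mul_le_mul_of_nonneg_left hlog this]

lemma upper_event {m c : ℝ} (hc : ∀ᵐ ω ∂μ, X ω ≤ c) (hm : c < m) :
    ∀ᶠ x in atTop, (1/x) * Real.log (∫ ω, gaussCDF (X ω - x) ∂μ) + x/2 < m := by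
  have htd := aux_tendsto 0 c
  filter_upwards [htd.eventually (eventually_lt_nhds hm),
    eventually_ge_atTop (max 1 c)] with x hx1 hx2
  have hx0 : (1:ℝ) ≤ x := le_trans (le_max_left _ _) hx2
  have hxc : c ≤ x := le_trans (le_max_right _ _) hx2
  refine lt_of_le_of_lt ?_ hx1
  have hI := integral_gcdf_pos μ X hX x
  have hup : ∫ ω, gaussCDF (X ω - x) ∂μ ≤ Real.exp (-(x - c)^2/2) := by
    refine (integral_gcdf_upper μ X hX hc x).trans ?_
    have h := gaussCDF_le_exp (t := x - c) (by linarith)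
    rw [neg_sub] at h
    exact h
  have hlog : Real.log (∫ ω, gaussCDF (X ω - x) ∂μ) ≤ -(x - c)^2/2 := by
    have := Real.log_le_log hI hup
    rwa [Real.log_exp] at this
  have h0 : (0:ℝ) ≤ 1/x := by positivity
  calc (1/x) * Real.log (∫ ω, gaussCDF (X ω - x) ∂μ) + x/2
      ≤ (1/x) * (-(x - c)^2/2) + x/2 := by nlinarith [mul_le_mul_of_nonneg_left hlog h0]
    _ = (1/x) * (0 - (x - c)^2/2) + x/2 := by ring
end Main

/-- For any real random variable `X`,
`(1/x)·log E[Φ(X − x)] + x/2 → ‖X‖_∞` (essential supremum, possibly `+∞`) as `x → ∞`. -/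
theorem stmt0 {Ω : Type*} [MeasurableSpace Ω] (μ : Measure Ω) [IsProbabilityMeasure μ]
    (X : Ω → ℝ) (hX : Measurable X) :
    Tendsto
      (fun x : ℝ =>
        (((1 / x) * Real.log (∫ ω, gaussCDF (X ω - x) ∂μ) + x / 2 : ℝ) : EReal))
      atTop (nhds (essSup (fun ω => (X ω : EReal)) μ)) := by
  have hae : ∀ᵐ ω ∂μ, (X ω : EReal) ≤ essSup (fun ω => (X ω : EReal)) μ :=
    ae_le_essSup (Filter.isBoundedUnder_of ⟨⊤, fun _ => le_top⟩)
  set M := essSup (fun ω => (X ω : EReal)) μ with hM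
  clear_value M
  have hbot : M ≠ ⊥ := by
    intro h
    rw [h] at hae
    have h2 : ∀ᵐ (_ : Ω) ∂μ, False := by
      filter_upwards [hae] with ω hω
      exact EReal.coe_ne_bot _ (le_bot_iff.1 hω)
    rw [ae_iff] at h2
    have huniv : μ Set.univ = 0 := by simpa using h2
    simp [measure_univ] at huniv
  have hpos : ∀ m' : ℝ, (m' : EReal) < M → 0 < μ {ω | m' ≤ X ω} := by
    intro m' hm'
    by_contra h
    push_neg at h
    have h0 : μ {ω | ¬ X ω < m'} = 0 := by
      have : {ω | ¬ X ω < m'} = {ω | m' ≤ X ω} := by ext ω; simp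
      rw [this]; exact le_antisymm h zero_le
    have hlt : ∀ᵐ ω ∂μ, X ω < m' := ae_iff.2 h0
    have : M ≤ (m' : EReal) := by
      rw [hM]
      refine essSup_le_of_ae_le _ ?_
      filter_upwards [hlt] with ω hω
      exact EReal.coe_le_coe_iff.2 hω.le
    exact absurd hm' (not_lt.2 this)
  have hcases : M = ⊤ ∨ ∃ c : ℝ, M = (c : EReal) := by
    induction M with
    | bot => exact absurd rfl hbot
    | coe c => exact Or.inr ⟨c, rfl⟩
    | top => exact Or.inl rfl
  rcases hcases with hMt | ⟨c, hc⟩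
  · rw [hMt]
    rw [EReal.tendsto_nhds_top_iff_real]
    intro m
    filter_upwards [lower_event μ X hX (m := m) (m' := m + 2) (ε := 1) one_pos
      (hpos (m + 2) (by rw [hMt]; exact EReal.coe_lt_top _)) (by linarith)] with x hx
    exact_mod_cast hx
  · rw [hc]
    apply EReal.tendsto_coe.2
    apply tendsto_order.2
    constructor
    · intro m hm
      have hmc : m < c := by exact_mod_cast hm
      exact lower_event μ X hX (m := m) (m' := (m + c)/2) (ε := (c - m)/4)
        (by linarith) (hpos _ (by rw [hc]; exact_mod_cast (by linarith : (m+c)/2 < c)))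
        (by linarith)
    · intro m hm
      have hmc : c < m := by exact_mod_cast hm
      apply upper_event μ X hX (c := c) ?_ hmc
      filter_upwards [hae] with ω hω
      rw [hc] at hω
      exact_mod_cast hω
end

section
/- Let A, B be finite sets, W a channel from A to B, c : A → [0, c_max] a cost function, and C(Γ) the capacity-cost function, which is concave and (on (Γ₀, Γ*)) continuous. Fix Γ ∈ (Γ₀, Γ*) and suppose the capacity-cost-achieving distribution P*[Γ] for cost Γ is unique. Then the set-valued map Γ' ↦ S_{C(Γ')} (the set of capacity-cost-achieving distributions at cost Γ') is upper hemicontinuous at Γ in the following sense: for every ε > 0 there exists δ > 0 such that |Γ' − Γ| < δ implies sup_{P ∈ S_{C(Γ')}} ‖P − P*[Γ]‖₁ < ε. -/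
open scoped BigOperators

/-- The set of probability distributions on a finite alphabet `A`. -/
def probs (A : Type*) [Fintype A] : Set (A → ℝ) :=
  {P | (∀ a, 0 ≤ P a) ∧ ∑ a, P a = 1}

/-- Mutual information `I(P, W)` for an input distribution `P` and channel `W`. -/
noncomputable def mutInfo {A B : Type*} [Fintype A] [Fintype B]
    (P : A → ℝ) (W : A → B → ℝ) : ℝ :=
  ∑ a, ∑ b, P a * W a b * Real.log (W a b / ∑ a', P a' * W a' b)

open Filter Topology

lemma isCompact_probs (A : Type*) [Fintype A] : IsCompact (probs A) := by
  refine IsCompact.of_isClosed_subset (isCompact_univ_pi fun _ : A => isCompact_Icc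
    (a := (0:ℝ)) (b := 1)) ?_ ?_
  · have : probs A = (⋂ a : A, {P : A → ℝ | 0 ≤ P a}) ∩ {P : A → ℝ | ∑ a, P a = 1} := by
      ext P; simp [probs, Set.mem_iInter]
    rw [this]
    exact (isClosed_iInter fun a => isClosed_le continuous_const (continuous_apply a)).inter
      (isClosed_eq (continuous_finset_sum _ fun a _ => continuous_apply a) continuous_const)
  · intro P hP
    obtain ⟨hnn, hsum⟩ := hP
    intro a _
    refine ⟨hnn a, ?_⟩
    calc P a ≤ ∑ a', P a' := Finset.single_le_sum (fun i _ => hnn i) (Finset.mem_univ a)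
    _ = 1 := hsum

lemma mutInfo_tendsto {A B : Type*} [Fintype A] [Fintype B]
    (W : A → B → ℝ) (hW : ∀ a, (∀ b, 0 ≤ W a b) ∧ ∑ b, W a b = 1)
    (P : ℕ → A → ℝ) (hP : ∀ n, P n ∈ probs A) (Q : A → ℝ) (hQ : Q ∈ probs A)
    (hconv : Tendsto P atTop (𝓝 Q)) :
    Tendsto (fun n => mutInfo (P n) W) atTop (𝓝 (mutInfo Q W)) := by
  have hcoord : ∀ a, Tendsto (fun n => P n a) atTop (𝓝 (Q a)) :=
    tendsto_pi_nhds.mp hconv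
  unfold mutInfo
  refine tendsto_finset_sum _ fun a _ => tendsto_finset_sum _ fun b _ => ?_
  set q : ℕ → ℝ := fun n => ∑ a', P n a' * W a' b with hq
  set qQ : ℝ := ∑ a', Q a' * W a' b with hqQ
  have hqconv : Tendsto q atTop (𝓝 qQ) :=
    tendsto_finset_sum _ fun a' _ => (hcoord a').mul tendsto_const_nhds
  have hqnn : ∀ n, 0 ≤ q n :=
    fun n => Finset.sum_nonneg fun a' _ => mul_nonneg ((hP n).1 a') ((hW a').1 b)
  have hxle : ∀ n, P n a * W a b ≤ q n := fun n =>
    Finset.single_le_sum (fun a' _ => mul_nonneg ((hP n).1 a') ((hW a').1 b))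
      (Finset.mem_univ a)
  have hxnn : ∀ n, 0 ≤ P n a * W a b := fun n => mul_nonneg ((hP n).1 a) ((hW a).1 b)
  rcases eq_or_lt_of_le ((hW a).1 b) with hW0 | hWpos
  · -- W a b = 0 : all terms are 0
    simp [← hW0]
  rcases eq_or_lt_of_le (Finset.sum_nonneg (fun a' (_ : a' ∈ Finset.univ) =>
      mul_nonneg (hQ.1 a') ((hW a').1 b)) : (0:ℝ) ≤ qQ) with hqQ0 | hqQpos
  · -- qQ = 0 : limit term is 0, squeeze
    replace hqQ0 : qQ = 0 := by rw [hqQ]; linarith [hqQ0]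
    have hQa : Q a * W a b = 0 := by
      have h1 : Q a * W a b ≤ qQ :=
        Finset.single_le_sum (fun a' _ => mul_nonneg (hQ.1 a') ((hW a').1 b))
          (Finset.mem_univ a)
      have h2 : 0 ≤ Q a * W a b := mul_nonneg (hQ.1 a) ((hW a).1 b)
      linarith
    rw [hQa]
    rw [zero_mul]
    -- bound: |term n| ≤ q n * |log (W a b)| + |q n * log (q n)|
    have hbound : ∀ n, |P n a * W a b * Real.log (W a b / q n)| ≤
        q n * |Real.log (W a b)| + |q n * Real.log (q n)| := by
      intro n
      rcases eq_or_lt_of_le (hqnn n) with h0 | hpos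
      · have hx0 : P n a * W a b = 0 := le_antisymm (h0 ▸ hxle n) (hxnn n)
        rw [hx0, zero_mul, abs_zero, ← h0]
        simp
      · rw [Real.log_div (ne_of_gt hWpos) (ne_of_gt hpos)]
        have h1 : |P n a * W a b * (Real.log (W a b) - Real.log (q n))| ≤
            P n a * W a b * |Real.log (W a b)| + P n a * W a b * |Real.log (q n)| := by
          rw [abs_mul, abs_of_nonneg (hxnn n)]
          rw [← mul_add]
          exact mul_le_mul_of_nonneg_left (abs_sub (Real.log (W a b)) (Real.log (q n)))
            (hxnn n)
        refine h1.trans ?_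
        gcongr ?_ + ?_
        · exact mul_le_mul_of_nonneg_right (hxle n) (abs_nonneg _)
        · rw [abs_mul, abs_of_nonneg (hqnn n)]
          exact mul_le_mul_of_nonneg_right (hxle n) (abs_nonneg _)
    refine squeeze_zero_norm hbound ?_
    have h1 : Tendsto (fun n => q n * |Real.log (W a b)|) atTop (𝓝 0) := by
      have := hqconv.mul (tendsto_const_nhds (x := |Real.log (W a b)|))
      rwa [hqQ0, zero_mul] at this
    have h2 : Tendsto (fun n => |q n * Real.log (q n)|) atTop (𝓝 0) := by
      have h3 : Tendsto (fun n => q n * Real.log (q n)) atTop (𝓝 (qQ * Real.log qQ)) :=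
        (Real.continuous_mul_log.tendsto qQ).comp hqconv
      rw [hqQ0] at h3
      simpa using h3.abs
    simpa using h1.add h2
  · -- qQ > 0 : plain continuity
    have hlog : Tendsto (fun n => Real.log (W a b / q n)) atTop
        (𝓝 (Real.log (W a b / qQ))) := by
      refine Tendsto.comp (Real.continuousAt_log ?_) (tendsto_const_nhds.div hqconv
        (ne_of_gt hqQpos))
      positivity
    exact ((hcoord a).mul tendsto_const_nhds).mul hlog


/-- Upper hemicontinuity of the set of capacity-cost-achieving distributions at a cost `Γ`
where the maximizer `P*[Γ]` is unique: for every `ε > 0` there is `δ > 0` such that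
`|Γ' − Γ| < δ` implies every capacity-cost-achieving distribution at cost `Γ'` is within
`ε` of `P*[Γ]` in `ℓ¹` distance. -/
theorem stmt9 {A B : Type*} [Fintype A] [Fintype B]
    (W : A → B → ℝ) (hW : ∀ a, (∀ b, 0 ≤ W a b) ∧ ∑ b, W a b = 1)
    (c : A → ℝ) (cmax : ℝ) (hc : ∀ a, c a ∈ Set.Icc 0 cmax)
    (CC : ℝ → ℝ)
    (hCC : ∀ Γ', CC Γ' =
      sSup {x | ∃ P ∈ probs A, (∑ a, P a * c a) ≤ Γ' ∧ x = mutInfo P W})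
    (Γ : ℝ) (hΓ0 : ∃ a, c a < Γ) (hCont : ContinuousAt CC Γ)
    (Pstar : A → ℝ) (hPstar : Pstar ∈ probs A)
    (hPcost : ∑ a, Pstar a * c a ≤ Γ) (hPopt : mutInfo Pstar W = CC Γ)
    (huniq : ∀ P ∈ probs A, (∑ a, P a * c a) ≤ Γ → mutInfo P W = CC Γ → P = Pstar) :
    ∀ ε > (0 : ℝ), ∃ δ > (0 : ℝ), ∀ Γ' : ℝ, |Γ' - Γ| < δ →
      ∀ P ∈ probs A, (∑ a, P a * c a) ≤ Γ' → mutInfo P W = CC Γ' →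
        (∑ a, |P a - Pstar a|) < ε := by
  by_contra hcon
  push_neg at hcon
  obtain ⟨ε, hε, H⟩ := hcon
  -- build sequences
  have hseq : ∀ n : ℕ, ∃ Γ' : ℝ, |Γ' - Γ| < 1 / (n + 1) ∧ ∃ P ∈ probs A,
      (∑ a, P a * c a) ≤ Γ' ∧ mutInfo P W = CC Γ' ∧ ε ≤ ∑ a, |P a - Pstar a| := by
    intro n
    obtain ⟨Γ', hΓ', P, hPmem, hPc, hPI, hPd⟩ := H (1 / (n + 1)) (by positivity)
    exact ⟨Γ', hΓ', P, hPmem, hPc, hPI, hPd⟩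
  choose G hG P hPmem hPc hPI hPd using hseq
  have hGconv : Tendsto G atTop (𝓝 Γ) := by
    rw [tendsto_iff_dist_tendsto_zero]
    refine squeeze_zero (fun n => dist_nonneg) (fun n => ?_)
      tendsto_one_div_add_atTop_nhds_zero_nat
    rw [Real.dist_eq]
    exact (hG n).le
  obtain ⟨Q, hQmem, φ, hφ, hconv⟩ := (isCompact_probs A).tendsto_subseq hPmem
  have hcoord : ∀ a, Tendsto (fun n => P (φ n) a) atTop (𝓝 (Q a)) :=
    tendsto_pi_nhds.mp hconv
  have hGφ : Tendsto (fun n => G (φ n)) atTop (𝓝 Γ) :=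
    hGconv.comp hφ.tendsto_atTop
  -- cost of Q
  have hQc : ∑ a, Q a * c a ≤ Γ := by
    refine le_of_tendsto_of_tendsto'
      (tendsto_finset_sum _ fun a _ => (hcoord a).mul tendsto_const_nhds) hGφ
      (fun n => hPc (φ n))
  -- mutInfo of Q
  have hQI : mutInfo Q W = CC Γ := by
    have h1 : Tendsto (fun n => mutInfo (P (φ n)) W) atTop (𝓝 (mutInfo Q W)) :=
      mutInfo_tendsto W hW _ (fun n => hPmem (φ n)) Q hQmem hconv
    have h2 : Tendsto (fun n => mutInfo (P (φ n)) W) atTop (𝓝 (CC Γ)) := by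
      have := hCont.tendsto.comp hGφ
      refine this.congr fun n => (hPI (φ n)).symm
    exact tendsto_nhds_unique h1 h2
  have hQeq : Q = Pstar := huniq Q hQmem hQc hQI
  -- ℓ¹ distance tends to 0, contradiction with ε ≤ ...
  have hdist : Tendsto (fun n => ∑ a, |P (φ n) a - Pstar a|) atTop (𝓝 0) := by
    have : Tendsto (fun n => ∑ a, |P (φ n) a - Pstar a|) atTop
        (𝓝 (∑ a, |Q a - Pstar a|)) :=
      tendsto_finset_sum _ fun a _ => ((hcoord a).sub tendsto_const_nhds).abs
    simpa [hQeq] using this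
  have : ε ≤ 0 := ge_of_tendsto' hdist fun n => hPd (φ n)
  linarith
end

section
/- Let Q* and Q_cc be two probability distributions on Bⁿ (B a finite set) defined as follows: Q*(yⁿ) = Σ_{xⁿ} P*(x₁)···P*(xₙ)·Π_i W(y_i|x_i), and Q_cc(yⁿ) = Σ_{xⁿ ∈ T} (1/|T|)·Π_i W(y_i|x_i), where T is the type class of an n-type t with ‖t − P*‖₁ ≤ τ'/n for a constant τ'. Then there exist an integer N and a constant κ such that for all n > N and all yⁿ ∈ Bⁿ, log( Q*(yⁿ)/Q_cc(yⁿ) ) ≥ −((s(P*) − 1)/2)·log n − κ, where s(P*) is the support size of P*. -/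
open scoped Classical BigOperators

lemma count_lower {A : Type*} [Fintype A] {n : ℕ} (k : A → ℕ)
    (T : Finset (Fin n → A))
    (hT : ∀ x ∈ T, ∀ a, (Finset.univ.filter (fun i => x i = a)).card = k a)
    (hT' : ∀ x : Fin n → A, (∀ a, (Finset.univ.filter (fun i => x i = a)).card = k a) → x ∈ T)
    (x₀ : Fin n → A) (hx₀ : x₀ ∈ T) :
    Nat.factorial n ≤ (∏ a, Nat.factorial (k a)) * T.card := by
  classical
  set f : Equiv.Perm (Fin n) → (Fin n → A) := fun σ => x₀ ∘ σ with hf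
  have himg : ∀ σ : Equiv.Perm (Fin n), f σ ∈ T := by
    intro σ
    apply hT'
    intro a
    rw [← hT x₀ hx₀ a]
    apply Finset.card_equiv σ
    intro i
    simp [hf]
  have hfiber : ∀ x ∈ T, ((Finset.univ : Finset (Equiv.Perm (Fin n))).filter
      (fun σ => f σ = x)).card ≤ ∏ a, Nat.factorial (k a) := by
    intro x hx
    have hcard : ((Finset.univ : Finset (Equiv.Perm (Fin n))).filter (fun σ => f σ = x)).card
        = Fintype.card {σ : Equiv.Perm (Fin n) // f σ = x} := by
      rw [Fintype.card_subtype]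
    rw [hcard]
    have hinj : Function.Injective
        (fun (σ : {σ : Equiv.Perm (Fin n) // f σ = x}) =>
          (fun a => ⟨fun i => ⟨σ.1 i.1, by
              have h1 : x₀ (σ.1 i.1) = x i.1 := congrFun σ.2 i.1
              have h2 : x i.1 = a := (Finset.mem_filter.mp i.2).2
              simp [h1, h2]⟩, by
            intro i j hij
            apply Subtype.ext
            exact σ.1.injective (congrArg Subtype.val hij)⟩ :
            ∀ a : A, ((Finset.univ.filter (fun i => x i = a) : Finset (Fin n)) ↪
              (Finset.univ.filter (fun i => x₀ i = a) : Finset (Fin n))))) := by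
      intro σ σ' h
      apply Subtype.ext; apply Equiv.ext; intro i
      have hi : i ∈ Finset.univ.filter (fun j => x j = x i) := by simp
      have := congrFun h (x i)
      have := congrArg (fun e => (e ⟨i, hi⟩ : _)) this
      exact congrArg Subtype.val this
    calc Fintype.card {σ : Equiv.Perm (Fin n) // f σ = x}
        ≤ Fintype.card (∀ a : A, ((Finset.univ.filter (fun i => x i = a) : Finset (Fin n)) ↪
            (Finset.univ.filter (fun i => x₀ i = a) : Finset (Fin n)))) :=
          Fintype.card_le_of_injective _ hinj
      _ = ∏ a, Nat.factorial (k a) := by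
          rw [Fintype.card_pi]
          apply Finset.prod_congr rfl
          intro a _
          rw [Fintype.card_embedding_eq, Fintype.card_coe, Fintype.card_coe,
            hT x hx a, hT x₀ hx₀ a, Nat.descFactorial_self]
  have := Finset.card_le_mul_card_image_of_maps_to
    (f := f) (s := Finset.univ) (t := T) (fun σ _ => himg σ) (∏ a, Nat.factorial (k a)) hfiber
  simpa [Fintype.card_perm] using this

lemma log_factorial_lower : ∃ c₀ : ℝ, c₀ ≤ 0 ∧ ∀ n : ℕ, 1 ≤ n →
    c₀ + (1/2) * Real.log (2*n) + n * Real.log n - n ≤ Real.log (Nat.factorial n) := by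
  obtain ⟨a, ha, hall⟩ := Stirling.stirlingSeq'_bounded_by_pos_constant
  refine ⟨Real.log (min a 1), Real.log_nonpos (le_min (le_of_lt ha) zero_le_one) (min_le_right _ _), ?_⟩
  intro n hn
  obtain ⟨m, rfl⟩ := Nat.exists_eq_add_of_le hn
  set N := 1 + m with hN
  have hNpos : (0:ℝ) < N := by positivity
  have hden : (0:ℝ) < Real.sqrt (2*N) * ((N:ℝ) / Real.exp 1) ^ N := by positivity
  have hst : min a 1 ≤ Stirling.stirlingSeq N := by
    have := hall m
    have h2 : Stirling.stirlingSeq (m+1) = Stirling.stirlingSeq N := by rw [hN, Nat.add_comm]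
    exact le_trans (min_le_left _ _) (h2 ▸ this)
  have hfac : min a 1 * (Real.sqrt (2*N) * ((N:ℝ) / Real.exp 1) ^ N) ≤ Nat.factorial N := by
    rw [Stirling.stirlingSeq] at hst
    calc min a 1 * (Real.sqrt (2*N) * ((N:ℝ) / Real.exp 1) ^ N)
        ≤ (Nat.factorial N / (Real.sqrt (2*N) * ((N:ℝ) / Real.exp 1) ^ N)) *
          (Real.sqrt (2*N) * ((N:ℝ) / Real.exp 1) ^ N) := by
          apply mul_le_mul_of_nonneg_right hst hden.le
      _ = Nat.factorial N := div_mul_cancel₀ _ hden.ne'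
  have hmin : (0:ℝ) < min a 1 := lt_min ha one_pos
  have := Real.log_le_log (by positivity) hfac
  have hlog : Real.log (min a 1 * (Real.sqrt (2*N) * ((N:ℝ) / Real.exp 1) ^ N))
      = Real.log (min a 1) + (1/2) * Real.log (2*N) + N * Real.log N - N := by
    rw [Real.log_mul hmin.ne' hden.ne',
      Real.log_mul (x := Real.sqrt (2*N)) (by positivity) (by positivity),
      Real.log_pow, Real.log_div hNpos.ne' (Real.exp_ne_zero 1), Real.log_exp,
      Real.log_sqrt (by positivity)]
    ring
  linarith [hlog ▸ this]

lemma log_factorial_upper (k : ℕ) :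
    Real.log (Nat.factorial k) ≤ 1 + (1/2) * Real.log (2*k) + k * Real.log k - k := by
  rcases Nat.eq_zero_or_pos k with rfl | hk
  · simp [Nat.factorial]
  obtain ⟨m, rfl⟩ := Nat.exists_eq_add_of_le hk
  set N := 1 + m with hN
  have hNpos : (0:ℝ) < N := by positivity
  have hden : (0:ℝ) < Real.sqrt (2*N) * ((N:ℝ) / Real.exp 1) ^ N := by positivity
  have hst : Stirling.stirlingSeq N ≤ Real.exp 1 / Real.sqrt 2 := by
    have h1 : Stirling.stirlingSeq N = (Stirling.stirlingSeq ∘ Nat.succ) m := by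
      simp [hN, Nat.add_comm, Function.comp]
    rw [h1]
    have := Stirling.stirlingSeq'_antitone (Nat.zero_le m)
    simpa [Function.comp, Stirling.stirlingSeq_one] using this
  have hfac : (Nat.factorial N : ℝ) ≤ (Real.exp 1 / Real.sqrt 2) *
      (Real.sqrt (2*N) * ((N:ℝ) / Real.exp 1) ^ N) := by
    rw [Stirling.stirlingSeq, div_le_iff₀ hden] at hst
    exact hst
  have := Real.log_le_log (by positivity) hfac
  calc Real.log (Nat.factorial N) ≤ Real.log ((Real.exp 1 / Real.sqrt 2) *
      (Real.sqrt (2*N) * ((N:ℝ) / Real.exp 1) ^ N)) := this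
    _ = (1 - (1/2)*Real.log 2) + (1/2) * Real.log (2*N) + N * Real.log N - N := by
        rw [Real.log_mul (x := Real.exp 1 / Real.sqrt 2) (by positivity) hden.ne',
          Real.log_mul (x := Real.sqrt (2*N)) (by positivity) (by positivity),
          Real.log_pow, Real.log_div hNpos.ne' (Real.exp_ne_zero 1), Real.log_exp,
          Real.log_div (Real.exp_ne_zero 1) (by positivity),
          Real.log_exp, Real.log_sqrt (by norm_num : (0:ℝ) ≤ 2), Real.log_sqrt (by positivity)]
        ring
    _ ≤ 1 + (1/2) * Real.log (2*N) + N * Real.log N - N := by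
        have : (0:ℝ) ≤ Real.log 2 := Real.log_nonneg one_le_two
        linarith

lemma one_sub_inv_le_log {x : ℝ} (hx : 0 < x) : 1 - 1/x ≤ Real.log x := by
  have := Real.log_le_sub_one_of_pos (show (0:ℝ) < 1/x by positivity)
  rw [Real.log_div one_ne_zero hx.ne', Real.log_one] at this
  linarith

set_option maxHeartbeats 1000000 in
/-- Comparison of the i.i.d. output distribution `Q*` and the constant-composition output
distribution `Q_cc` (over a type class `T` of an `n`-type `t` with `‖t − P*‖₁ ≤ τ'/n`):
there are `N` and `κ` such that for all `n > N` and every output sequence `yⁿ`,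
`log(Q*(yⁿ)/Q_cc(yⁿ)) ≥ −((s(P*)−1)/2)·log n − κ`. -/
theorem stmt11 {A B : Type*} [Fintype A] [Fintype B]
    (W : A → B → ℝ) (hW : ∀ a, (∀ b, 0 ≤ W a b) ∧ ∑ b, W a b = 1)
    (Pstar : A → ℝ) (hP0 : ∀ a, 0 ≤ Pstar a) (hP1 : ∑ a, Pstar a = 1)
    (τ' : ℝ) (hτ' : 0 ≤ τ') :
    ∃ N : ℕ, ∃ κ : ℝ, ∀ n : ℕ, N < n → ∀ t : A → ℝ,
      (∀ a, ∃ k : ℕ, t a = (k : ℝ) / n) →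
      (∑ a, |t a - Pstar a|) ≤ τ' / n →
      (∀ a, t a ≠ 0 → Pstar a ≠ 0) →
      ∀ y : Fin n → B,
        Real.log
            ((∏ i, ∑ a, Pstar a * W a (y i)) /
              (((Finset.univ.filter (fun x : Fin n → A => ∀ a,
                  (((Finset.univ.filter (fun i => x i = a)).card : ℝ) = n * t a))).sum
                  (fun x => ∏ i, W (x i) (y i))) /
                ((Finset.univ.filter (fun x : Fin n → A => ∀ a,
                  (((Finset.univ.filter (fun i => x i = a)).card : ℝ) = n * t a))).card)))
          ≥ -((((Finset.univ.filter (fun a => Pstar a ≠ 0)).card : ℝ) - 1) / 2) * Real.log n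
              - κ := by
  classical
  set suppP := Finset.univ.filter (fun a => Pstar a ≠ 0) with hsuppP
  have hsne : suppP.Nonempty := by
    by_contra h
    rw [Finset.not_nonempty_iff_eq_empty, Finset.filter_eq_empty_iff] at h
    push_neg at h
    rw [Finset.sum_eq_zero (fun a _ => h (Finset.mem_univ a))] at hP1
    norm_num at hP1
  have hs1 : 1 ≤ suppP.card := Finset.card_pos.mpr hsne
  have hs1R : (1:ℝ) ≤ suppP.card := by exact_mod_cast hs1
  set pmin := suppP.inf' hsne Pstar with hpmin_def
  have hpmin : 0 < pmin := by
    rw [hpmin_def, Finset.lt_inf'_iff]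
    intro a ha
    exact lt_of_le_of_ne (hP0 a) (Ne.symm (Finset.mem_filter.mp ha).2)
  have hpmin_le : ∀ a ∈ suppP, pmin ≤ Pstar a := fun a ha => Finset.inf'_le _ ha
  obtain ⟨c₀, hc₀, hlow⟩ := log_factorial_lower
  set s : ℝ := (suppP.card : ℝ) with hsdef
  refine ⟨0, s + (s-1)/2 * Real.log 2 + τ' / pmin - c₀, ?_⟩
  intro n hn t ht hl1 hsupp y
  have hn1 : 1 ≤ n := hn
  have hnR : (0:ℝ) < n := by exact_mod_cast hn
  have hlogn : 0 ≤ Real.log n := Real.log_nonneg (by exact_mod_cast hn1)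
  have hlog2 : 0 ≤ Real.log 2 := Real.log_nonneg one_le_two
  have hκ0 : 0 ≤ s + (s-1)/2 * Real.log 2 + τ' / pmin - c₀ := by
    have h1 : 0 ≤ (s-1)/2 * Real.log 2 := by
      apply mul_nonneg (by linarith) hlog2
    have h2 : 0 ≤ τ' / pmin := div_nonneg hτ' hpmin.le
    linarith
  have hRHS : -((s - 1) / 2) * Real.log n - (s + (s-1)/2 * Real.log 2 + τ' / pmin - c₀) ≤ 0 := by
    have : 0 ≤ ((s-1)/2) * Real.log n := mul_nonneg (by linarith) hlogn
    linarith
  choose k hk using ht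
  have hkt : ∀ a, (n:ℝ) * t a = k a := by
    intro a; rw [hk a]; field_simp
  set T := Finset.univ.filter (fun x : Fin n → A => ∀ a,
      (((Finset.univ.filter (fun i => x i = a)).card : ℝ) = n * t a)) with hTdef
  have hTmem : ∀ x : Fin n → A, x ∈ T ↔
      ∀ a, (Finset.univ.filter (fun i => x i = a)).card = k a := by
    intro x
    rw [hTdef]
    simp only [Finset.mem_filter, Finset.mem_univ, true_and]
    constructor
    · intro h a
      have := (h a).trans (hkt a)
      exact_mod_cast this
    · intro h a
      rw [h a, ← hkt a]
  set S := T.sum (fun x => ∏ i, W (x i) (y i)) with hSdef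
  have hS0 : 0 ≤ S := Finset.sum_nonneg fun x _ =>
    Finset.prod_nonneg fun i _ => (hW (x i)).1 (y i)
  by_cases hTne : T.Nonempty
  swap
  · rw [Finset.not_nonempty_iff_eq_empty] at hTne
    rw [ge_iff_le, hSdef, hTne]
    simp [Real.log_zero]
    linarith [hRHS]
  obtain ⟨x₀, hx₀⟩ := hTne
  have hx₀k := (hTmem x₀).mp hx₀
  -- sum of k over univ is n
  have hksum : ∑ a, k a = n := by
    have h := Finset.card_eq_sum_card_fiberwise
      (f := x₀) (s := (Finset.univ : Finset (Fin n))) (t := Finset.univ)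
      (fun x _ => Finset.mem_univ _)
    rw [Finset.card_univ, Fintype.card_fin] at h
    calc ∑ a, k a = ∑ a, (Finset.univ.filter fun i => x₀ i = a).card :=
          Finset.sum_congr rfl (fun a _ => (hx₀k a).symm)
      _ = n := h.symm
  have hkle : ∀ a, k a ≤ n := by
    intro a
    rw [← hksum]
    exact Finset.single_le_sum (fun _ _ => Nat.zero_le _) (Finset.mem_univ a)
  have hPk : ∀ a, k a ≠ 0 → 0 < Pstar a := by
    intro a hka
    have hta : t a ≠ 0 := by
      rw [hk a]
      positivity
    exact lt_of_le_of_ne (hP0 a) (Ne.symm (hsupp a hta))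
  have hk0 : ∀ a, a ∉ suppP → k a = 0 := by
    intro a ha
    by_contra hka
    have : Pstar a ≠ 0 := (hPk a hka).ne'
    exact ha (by simp [hsuppP, this])
  set c := ∏ a, (Pstar a)^(k a) with hcdef
  have hfac_ne : ∀ a, (Pstar a)^(k a) ≠ 0 := by
    intro a
    rcases Nat.eq_zero_or_pos (k a) with h0 | h1
    · rw [h0, pow_zero]; norm_num
    · exact pow_ne_zero _ (hPk a (Nat.pos_iff_ne_zero.mp h1)).ne'
  have hcpos : 0 < c := by
    apply Finset.prod_pos
    intro a _
    rcases Nat.eq_zero_or_pos (k a) with h0 | h1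
    · rw [h0, pow_zero]; norm_num
    · exact pow_pos (hPk a (Nat.pos_iff_ne_zero.mp h1)) _
  set Q := ∏ i, ∑ a, Pstar a * W a (y i) with hQdef
  have hQsum : Q = ∑ x : Fin n → A, ∏ i, Pstar (x i) * W (x i) (y i) := by
    rw [hQdef, Finset.prod_univ_sum]
    rw [Fintype.piFinset_univ]
  have hQc : c * S ≤ Q := by
    have hxprod : ∀ x ∈ T, ∏ i, Pstar (x i) * W (x i) (y i) = c * ∏ i, W (x i) (y i) := by
      intro x hx
      rw [Finset.prod_mul_distrib]
      congr 1
      rw [hcdef, ← Finset.prod_fiberwise_of_maps_to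
        (g := x) (t := Finset.univ) (fun i _ => Finset.mem_univ _) (fun i => Pstar (x i))]
      apply Finset.prod_congr rfl
      intro a _
      rw [Finset.prod_congr rfl (fun i hi => by rw [(Finset.mem_filter.mp hi).2]),
        Finset.prod_const, (hTmem x).mp hx a]
    rw [hQsum]
    calc c * S = ∑ x ∈ T, ∏ i, Pstar (x i) * W (x i) (y i) := by
          rw [hSdef, Finset.mul_sum]
          exact (Finset.sum_congr rfl fun x hx => (hxprod x hx).symm)
      _ ≤ ∑ x : Fin n → A, ∏ i, Pstar (x i) * W (x i) (y i) :=
          Finset.sum_le_sum_of_subset_of_nonneg (Finset.subset_univ T)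
            (fun x _ _ => Finset.prod_nonneg fun i _ =>
              mul_nonneg (hP0 (x i)) ((hW (x i)).1 (y i)))
  rcases eq_or_lt_of_le hS0 with hSeq | hSpos
  · rw [ge_iff_le, ← hSeq]
    simp [Real.log_zero]
    linarith [hRHS]
  have hTc : (0:ℝ) < T.card := by
    exact_mod_cast Finset.card_pos.mpr ⟨x₀, hx₀⟩
  have key1 : c * (T.card:ℝ) ≤ Q / (S / T.card) := by
    rw [div_div_eq_mul_div]
    have heq : c * (T.card:ℝ) = c * S * T.card / S := by
      field_simp
    rw [heq]
    gcongr
  have hQpos : 0 < Q := lt_of_lt_of_le (by positivity) hQc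
  have key2 : Real.log (c * T.card) ≤ Real.log (Q / (S / T.card)) :=
    Real.log_le_log (by positivity) key1
  have hlogmul : Real.log (c * T.card) = Real.log c + Real.log (T.card:ℝ) :=
    Real.log_mul hcpos.ne' hTc.ne'
  -- multinomial lower bound
  have hTcard : Nat.factorial n ≤ (∏ a, Nat.factorial (k a)) * T.card :=
    count_lower k T (fun x hx => (hTmem x).mp hx) (fun x hx => (hTmem x).mpr hx) x₀ hx₀
  have hprodfac_pos : (0:ℝ) < ∏ a, (Nat.factorial (k a) : ℝ) :=
    Finset.prod_pos fun a _ => by exact_mod_cast Nat.factorial_pos (k a)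
  have hlogT : Real.log (Nat.factorial n) - ∑ a, Real.log (Nat.factorial (k a) : ℝ)
      ≤ Real.log (T.card:ℝ) := by
    have h1 : ((Nat.factorial n : ℝ)) / (∏ a, (Nat.factorial (k a) : ℝ)) ≤ (T.card:ℝ) := by
      rw [div_le_iff₀ hprodfac_pos]
      calc ((Nat.factorial n : ℝ)) ≤ ((∏ a, Nat.factorial (k a)) * T.card : ℕ) := by
            exact_mod_cast hTcard
        _ = (T.card:ℝ) * ∏ a, (Nat.factorial (k a) : ℝ) := by
            push_cast
            ring
    have h2 := Real.log_le_log (by positivity) h1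
    rw [Real.log_div (by positivity) hprodfac_pos.ne',
      Real.log_prod (fun a _ => by exact_mod_cast (Nat.factorial_pos (k a)).ne')] at h2
    linarith
  have hlogc : Real.log c = ∑ a, (k a : ℝ) * Real.log (Pstar a) := by
    rw [hcdef, Real.log_prod (fun a _ => hfac_ne a)]
    exact Finset.sum_congr rfl fun a _ => by rw [Real.log_pow]
  -- restrict sums to suppP
  have hsum1 : ∑ a, Real.log (Nat.factorial (k a) : ℝ)
      = ∑ a ∈ suppP, Real.log (Nat.factorial (k a) : ℝ) :=
    (Finset.sum_subset (Finset.subset_univ suppP)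
      (fun a _ ha => by rw [hk0 a ha]; simp)).symm
  have hsum2 : ∑ a, (k a : ℝ) * Real.log (Pstar a)
      = ∑ a ∈ suppP, (k a : ℝ) * Real.log (Pstar a) :=
    (Finset.sum_subset (Finset.subset_univ suppP)
      (fun a _ ha => by rw [hk0 a ha]; simp)).symm
  have hksuppR : ∑ a ∈ suppP, (k a : ℝ) = n := by
    have : ∑ a ∈ suppP, k a = ∑ a, k a :=
      Finset.sum_subset (Finset.subset_univ suppP) (fun a _ ha => hk0 a ha)
    rw [← Nat.cast_sum, this, hksum]
  -- termwise estimate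
  have hterm : ∀ a ∈ suppP,
      -1 - (1/2) * Real.log (2*n) + (k a : ℝ) - (n:ℝ) * |t a - Pstar a| / pmin
      ≤ (k a : ℝ) * Real.log n - Real.log (Nat.factorial (k a) : ℝ)
        + (k a : ℝ) * Real.log (Pstar a) := by
    intro a ha
    have hPa : 0 < Pstar a :=
      lt_of_le_of_ne (hP0 a) (Ne.symm (Finset.mem_filter.mp ha).2)
    have hup := log_factorial_upper (k a)
    have h2k : Real.log (2*(k a : ℝ)) ≤ Real.log (2*(n:ℝ)) := by
      rcases Nat.eq_zero_or_pos (k a) with h0 | h1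
      · rw [h0]
        simp only [Nat.cast_zero, mul_zero, Real.log_zero]
        apply Real.log_nonneg
        have : (1:ℝ) ≤ n := by exact_mod_cast hn1
        linarith
      · apply Real.log_le_log (by positivity)
        have : (k a : ℝ) ≤ n := by exact_mod_cast hkle a
        linarith
    have hmain : -((n:ℝ) * |t a - Pstar a| / pmin)
        ≤ (k a : ℝ) * (Real.log n + Real.log (Pstar a) - Real.log (k a : ℝ)) := by
      rcases Nat.eq_zero_or_pos (k a) with h0 | h1
      · rw [h0]
        simp only [Nat.cast_zero, zero_mul]
        have : 0 ≤ (n:ℝ) * |t a - Pstar a| / pmin := by positivity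
        linarith
      · have hka : (0:ℝ) < (k a : ℝ) := by exact_mod_cast h1
        have hkn : (k a : ℝ) ≤ n := by exact_mod_cast hkle a
        have hx : Real.log n + Real.log (Pstar a) - Real.log (k a : ℝ)
            = Real.log (((n:ℝ) * Pstar a) / (k a : ℝ)) := by
          rw [Real.log_div (by positivity) hka.ne', Real.log_mul hnR.ne' hPa.ne']
        have hlb := one_sub_inv_le_log (x := ((n:ℝ) * Pstar a) / (k a : ℝ)) (by positivity)
        have hmul := mul_le_mul_of_nonneg_left hlb hka.le
        have he1 : (k a : ℝ) * (1 - 1/(((n:ℝ) * Pstar a) / (k a : ℝ)))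
            = ((k a : ℝ)/Pstar a) * (Pstar a - t a) := by
          rw [hk a]
          field_simp
        have hdivle : (k a : ℝ)/Pstar a ≤ (n:ℝ)/pmin := by
          gcongr
          exact hpmin_le a ha
        have habs : -( ((k a : ℝ)/Pstar a) * |t a - Pstar a|)
            ≤ ((k a : ℝ)/Pstar a) * (Pstar a - t a) := by
          have h1 : -(|t a - Pstar a|) ≤ Pstar a - t a := by
            rw [abs_sub_comm]
            exact neg_abs_le _
          have := mul_le_mul_of_nonneg_left h1 (by positivity : (0:ℝ) ≤ (k a : ℝ)/Pstar a)
          linarith [this]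
        have habs2 : ((k a : ℝ)/Pstar a) * |t a - Pstar a|
            ≤ ((n:ℝ)/pmin) * |t a - Pstar a| :=
          mul_le_mul_of_nonneg_right hdivle (abs_nonneg _)
        have hflip : (n:ℝ) * |t a - Pstar a| / pmin = ((n:ℝ)/pmin) * |t a - Pstar a| := by
          ring
        rw [hx]
        rw [he1] at hmul
        linarith
    linarith
  have hsumterm : ∑ a ∈ suppP,
      (-1 - (1/2) * Real.log (2*n) + (k a : ℝ) - (n:ℝ) * |t a - Pstar a| / pmin)
      ≤ ∑ a ∈ suppP, ((k a : ℝ) * Real.log n - Real.log (Nat.factorial (k a) : ℝ)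
        + (k a : ℝ) * Real.log (Pstar a)) :=
    Finset.sum_le_sum hterm
  have hsplitL : ∑ a ∈ suppP,
      (-1 - (1/2) * Real.log (2*n) + (k a : ℝ) - (n:ℝ) * |t a - Pstar a| / pmin)
      = s * (-1 - (1/2) * Real.log (2*n)) + (n:ℝ)
        - ((n:ℝ)/pmin) * ∑ a ∈ suppP, |t a - Pstar a| := by
    have hcong : ∀ a ∈ suppP,
        (-1 - (1/2) * Real.log (2*n) + (k a : ℝ) - (n:ℝ) * |t a - Pstar a| / pmin)
        = (-1 - (1/2) * Real.log (2*n)) + ((k a : ℝ) - ((n:ℝ)/pmin) * |t a - Pstar a|) :=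
      fun a _ => by ring
    rw [Finset.sum_congr rfl hcong, Finset.sum_add_distrib, Finset.sum_const, nsmul_eq_mul,
      Finset.sum_sub_distrib, hksuppR, ← Finset.mul_sum, hsdef]
    ring
  have habs_sum : ∑ a ∈ suppP, |t a - Pstar a| ≤ τ'/(n:ℝ) :=
    le_trans (Finset.sum_le_sum_of_subset_of_nonneg (Finset.subset_univ suppP)
      (fun a _ _ => abs_nonneg _)) hl1
  have hbnd : ((n:ℝ)/pmin) * ∑ a ∈ suppP, |t a - Pstar a| ≤ τ'/pmin := by
    have h1 : ((n:ℝ)/pmin) * ∑ a ∈ suppP, |t a - Pstar a| ≤ ((n:ℝ)/pmin) * (τ'/(n:ℝ)) :=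
      mul_le_mul_of_nonneg_left habs_sum (by positivity)
    have h2 : ((n:ℝ)/pmin) * (τ'/(n:ℝ)) = τ'/pmin := by
      field_simp
    linarith
  have h9 : Real.log (2*(n:ℝ)) = Real.log 2 + Real.log n :=
    Real.log_mul two_ne_zero hnR.ne'
  have h9s : s * Real.log (2*(n:ℝ)) = s * Real.log 2 + s * Real.log n := by
    rw [h9]; ring
  have hnlogn : (n:ℝ) * Real.log n = ∑ a ∈ suppP, (k a : ℝ) * Real.log n := by
    rw [← Finset.sum_mul, hksuppR]
  have hsplitR : ∑ a ∈ suppP, ((k a : ℝ) * Real.log n - Real.log (Nat.factorial (k a) : ℝ)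
        + (k a : ℝ) * Real.log (Pstar a))
      = (∑ a ∈ suppP, (k a : ℝ) * Real.log n)
        - (∑ a ∈ suppP, Real.log (Nat.factorial (k a) : ℝ))
        + ∑ a ∈ suppP, (k a : ℝ) * Real.log (Pstar a) := by
    rw [Finset.sum_add_distrib, Finset.sum_sub_distrib]
  have hfactlow := hlow n hn1
  rw [ge_iff_le]
  linarith [key2, hlogmul, hlogT, hlogc, hsum1, hsum2, hsumterm, hsplitL, hbnd,
    hfactlow, h9, h9s, hnlogn, hsplitR]
end

section
/- (Meta-converse bound) Let W : Aⁿ → P(Bⁿ) be a channel, and consider a random code with M messages, encoder-induced input distribution P̄ on Aⁿ, and average error probability at most ε ∈ (0,1). Then for every ρ > 0 and every auxiliary distribution q on Bⁿ, log M ≤ log ρ − log[ ( 1 − ε − (P̄ ∘ W)( W(Yⁿ|Xⁿ)/q(Yⁿ) > ρ ) )⁺ ], where (P̄ ∘ W) is the joint law of (Xⁿ, Yⁿ) with Xⁿ ~ P̄ and Yⁿ ~ W(·|Xⁿ), and (·)⁺ = max(·, 0). -/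
open scoped Classical BigOperators

/-- Meta-converse bound: for a random code with `M` equiprobable messages, randomized
encoder `e`, randomized decoder `g`, channel `W`, and average error probability at most
`ε`, one has (for every `ρ > 0` and auxiliary output distribution `q`)
`M · (1 − ε − (P̄∘W)(W(Y|X)/q(Y) > ρ))⁺ ≤ ρ`, which is the meta-converse bound
`log M ≤ log ρ − log[(1 − ε − (P̄∘W)(W(Y|X)/q(Y) > ρ))⁺]`. -/
theorem stmt12 {X Y : Type*} [Fintype X] [Fintype Y]
    (W : X → Y → ℝ) (hW : ∀ x, (∀ y, 0 ≤ W x y) ∧ ∑ y, W x y = 1)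
    (M : ℕ) (hM : 0 < M)
    (e : Fin M → X → ℝ) (he : ∀ m, (∀ x, 0 ≤ e m x) ∧ ∑ x, e m x = 1)
    (g : Y → Fin M → ℝ) (hg : ∀ y, (∀ m, 0 ≤ g y m) ∧ ∑ m, g y m = 1)
    (ε : ℝ) (hε : ε ∈ Set.Ioo (0 : ℝ) 1)
    (herr : (1 / M : ℝ) * ∑ m, ∑ x, e m x * ∑ y, W x y * (1 - g y m) ≤ ε)
    (ρ : ℝ) (hρ : 0 < ρ)
    (q : Y → ℝ) (hq0 : ∀ y, 0 ≤ q y) (hq1 : ∑ y, q y = 1) :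
    (M : ℝ) *
        max (1 - ε - ∑ x, ∑ y,
          (if ρ * q y < W x y then ((1 / M : ℝ) * ∑ m, e m x) * W x y else 0)) 0
      ≤ ρ := by
  have hM' : (0:ℝ) < M := by exact_mod_cast hM
  set T : X → Y → ℝ := fun x y => (1 / M : ℝ) * ∑ m, e m x * g y m with hT
  set S : ℝ := ∑ x, ∑ y,
      (if ρ * q y < W x y then ((1 / M : ℝ) * ∑ m, e m x) * W x y else 0) with hS
  -- rewrite the error expression
  have hSm : ∀ m, ∑ x, e m x * ∑ y, W x y * (1 - g y m)
      = 1 - ∑ x, ∑ y, e m x * g y m * W x y := by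
    intro m
    have h1 : ∀ x, e m x * ∑ y, W x y * (1 - g y m)
        = e m x - ∑ y, e m x * g y m * W x y := by
      intro x
      have h2 : ∑ y, W x y * (1 - g y m) = 1 - ∑ y, W x y * g y m := by
        rw [show (1:ℝ) - ∑ y, W x y * g y m
            = (∑ y, W x y) - ∑ y, W x y * g y m by rw [(hW x).2],
          ← Finset.sum_sub_distrib]
        exact Finset.sum_congr rfl fun y _ => by ring
      rw [h2, mul_sub, mul_one, Finset.mul_sum]
      congr 1
      exact Finset.sum_congr rfl fun y _ => by ring
    rw [Finset.sum_congr rfl fun x _ => h1 x, Finset.sum_sub_distrib, (he m).2]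
  have key1 : (1:ℝ) - ε ≤ ∑ x, ∑ y, T x y * W x y := by
    have hA : ∑ x, ∑ y, T x y * W x y
        = (1/M:ℝ) * ∑ m, ∑ x, ∑ y, e m x * g y m * W x y := by
      have hpt : ∀ x, ∑ y, T x y * W x y
          = ∑ m, ∑ y, (1/M:ℝ) * (e m x * g y m * W x y) := by
        intro x
        rw [Finset.sum_comm]
        refine Finset.sum_congr rfl fun y _ => ?_
        simp only [hT]
        rw [Finset.mul_sum, Finset.sum_mul]
        refine Finset.sum_congr rfl fun m _ => by ring
      rw [Finset.sum_congr rfl fun x _ => hpt x, Finset.sum_comm, Finset.mul_sum]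
      refine Finset.sum_congr rfl fun m _ => ?_
      rw [Finset.mul_sum]
      exact Finset.sum_congr rfl fun x _ => (Finset.mul_sum _ _ _).symm
    rw [hA]
    have h := herr
    rw [Finset.sum_congr rfl fun m _ => hSm m, Finset.sum_sub_distrib] at h
    simp only [Finset.sum_const, Finset.card_univ, Fintype.card_fin, nsmul_eq_mul,
      mul_one] at h
    rw [mul_sub] at h
    have hMM : (1/M:ℝ) * (M:ℝ) = 1 := by field_simp
    rw [hMM] at h
    linarith
  have hTy : ∀ y, ∑ x, T x y = (1/M:ℝ) := by
    intro y
    simp only [hT]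
    rw [← Finset.mul_sum, Finset.sum_comm]
    have h3 : ∑ m, ∑ x, e m x * g y m = 1 := by
      have : ∀ m : Fin M, ∑ x, e m x * g y m = g y m := by
        intro m
        rw [← Finset.sum_mul, (he m).2, one_mul]
      rw [Finset.sum_congr rfl fun m _ => this m, (hg y).2]
    rw [h3, mul_one]
  have key2 : ∑ x, ∑ y, T x y * q y = (1/M:ℝ) := by
    rw [Finset.sum_comm]
    have : ∀ y, ∑ x, T x y * q y = (1/M:ℝ) * q y := by
      intro y
      rw [← Finset.sum_mul, hTy y]
    rw [Finset.sum_congr rfl fun y _ => this y, ← Finset.mul_sum, hq1, mul_one]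
  have hT0 : ∀ x y, 0 ≤ T x y := by
    intro x y
    apply mul_nonneg (by positivity)
    exact Finset.sum_nonneg fun m _ => mul_nonneg ((he m).1 x) ((hg y).1 m)
  have hTle : ∀ x y, T x y ≤ (1/M:ℝ) * ∑ m, e m x := by
    intro x y
    apply mul_le_mul_of_nonneg_left _ (by positivity)
    refine Finset.sum_le_sum fun m _ => ?_
    calc e m x * g y m ≤ e m x * 1 := by
          apply mul_le_mul_of_nonneg_left _ ((he m).1 x)
          have := (hg y).2
          have h0 : ∀ m', 0 ≤ g y m' := (hg y).1
          calc g y m = ∑ m', (if m' = m then g y m' else 0) := by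
                simp
            _ ≤ ∑ m', g y m' := Finset.sum_le_sum fun m' _ => by
                split <;> simp [h0 m']
            _ = 1 := (hg y).2
      _ = e m x := mul_one _
  have key3 : ∑ x, ∑ y, T x y * (W x y - ρ * q y) ≤ S := by
    rw [hS]
    refine Finset.sum_le_sum fun x _ => Finset.sum_le_sum fun y _ => ?_
    by_cases h : ρ * q y < W x y
    · rw [if_pos h]
      calc T x y * (W x y - ρ * q y)
          ≤ ((1/M:ℝ) * ∑ m, e m x) * (W x y - ρ * q y) :=
            mul_le_mul_of_nonneg_right (hTle x y) (by linarith)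
        _ ≤ ((1/M:ℝ) * ∑ m, e m x) * W x y := by
            apply mul_le_mul_of_nonneg_left _ _
            · nlinarith [hq0 y, hρ.le]
            · exact mul_nonneg (by positivity)
                (Finset.sum_nonneg fun m _ => (he m).1 x)

    · rw [if_neg h]
      push_neg at h
      have := hT0 x y
      nlinarith
  have key4 : ∑ x, ∑ y, T x y * (W x y - ρ * q y)
      = (∑ x, ∑ y, T x y * W x y) - ρ * (1/M:ℝ) := by
    have : ∀ x, ∑ y, T x y * (W x y - ρ * q y)
        = (∑ y, T x y * W x y) - ρ * ∑ y, T x y * q y := by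
      intro x
      rw [Finset.mul_sum, ← Finset.sum_sub_distrib]
      exact Finset.sum_congr rfl fun y _ => by ring
    rw [Finset.sum_congr rfl fun x _ => this x, Finset.sum_sub_distrib,
      ← Finset.mul_sum, key2]
  have main : 1 - ε - S ≤ ρ / M := by
    have h5 : (∑ x, ∑ y, T x y * W x y) - ρ * (1/M:ℝ) ≤ S := by
      rw [← key4]; exact key3
    have : ρ * (1/M:ℝ) = ρ / M := by ring
    linarith [key1, this ▸ h5]
  have hmax : max (1 - ε - S) 0 ≤ ρ / M :=
    max_le main (le_of_lt (div_pos hρ hM'))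
  calc (M:ℝ) * max (1 - ε - S) 0 ≤ (M:ℝ) * (ρ / M) :=
        mul_le_mul_of_nonneg_left hmax hM'.le
    _ = ρ := by field_simp
end

section
/- For any probability distributions P and Q on a finite (or measurable) space, any α ∈ (0,1), and any ρ > 0: α − ρ·β_α(P, Q) ≤ P( dP/dQ > ρ ), where β_α(P, Q) is the minimum of Q-probability of acceptance over all (randomized) tests T whose P-probability of acceptance is at least α. -/
open scoped Classical BigOperators

/-- For distributions `P, Q` on a finite space, `α ∈ (0,1)` and `ρ > 0`:
`α − ρ·β_α(P, Q) ≤ P(dP/dQ > ρ)`, where `β_α(P,Q)` is the minimum type-II error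
probability over randomized tests with type-I acceptance probability at least `α`. -/
theorem stmt13 {U : Type*} [Fintype U]
    (P Q : U → ℝ) (hP0 : ∀ u, 0 ≤ P u) (hP1 : ∑ u, P u = 1)
    (hQ0 : ∀ u, 0 ≤ Q u) (hQ1 : ∑ u, Q u = 1)
    (α : ℝ) (hα : α ∈ Set.Ioo (0 : ℝ) 1) (ρ : ℝ) (hρ : 0 < ρ) :
    α - ρ * sInf {b : ℝ | ∃ T : U → ℝ, (∀ u, T u ∈ Set.Icc (0 : ℝ) 1) ∧
        α ≤ (∑ u, P u * T u) ∧ b = ∑ u, Q u * T u}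
      ≤ ∑ u, (if ρ * Q u < P u then P u else 0) := by
  set R : ℝ := ∑ u, (if ρ * Q u < P u then P u else 0) with hR
  set S : Set ℝ := {b : ℝ | ∃ T : U → ℝ, (∀ u, T u ∈ Set.Icc (0 : ℝ) 1) ∧
      α ≤ (∑ u, P u * T u) ∧ b = ∑ u, Q u * T u} with hS
  have hne : S.Nonempty := by
    refine ⟨1, fun _ => 1, fun u => ⟨zero_le_one, le_refl 1⟩, ?_, ?_⟩
    · simp [hP1]; exact hα.2.le
    · simp [hQ1]
  have key : ∀ b ∈ S, (α - R) / ρ ≤ b := by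
    rintro b ⟨T, hT, hαT, rfl⟩
    rw [div_le_iff₀ hρ]
    have h1 : α - ρ * ∑ u, Q u * T u ≤ ∑ u, (P u - ρ * Q u) * T u := by
      rw [Finset.mul_sum]
      have : ∑ u, (P u - ρ * Q u) * T u
          = ∑ u, P u * T u - ∑ u, ρ * (Q u * T u) := by
        rw [← Finset.sum_sub_distrib]; congr 1; ext u; ring
      rw [this]
      have : ∑ u, ρ * (Q u * T u) = ∑ u, ρ * Q u * T u := by
        congr 1; ext u; ring
      linarith [hαT, this ▸ le_refl (∑ u, ρ * (Q u * T u))]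
    have h2 : ∑ u, (P u - ρ * Q u) * T u ≤ R := by
      rw [hR]
      apply Finset.sum_le_sum
      intro u _
      by_cases h : ρ * Q u < P u
      · simp only [h, if_pos]
        calc (P u - ρ * Q u) * T u ≤ (P u - ρ * Q u) * 1 :=
              mul_le_mul_of_nonneg_left (hT u).2 (by linarith)
          _ ≤ P u := by nlinarith [hQ0 u, hρ.le]
      · simp only [h, if_neg, not_false_iff]
        push_neg at h
        have := (hT u).1
        nlinarith
    linarith
  have hInf : (α - R) / ρ ≤ sInf S := le_csInf hne key
  have := mul_le_mul_of_nonneg_left hInf hρ.le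
  rw [mul_div_cancel₀ _ hρ.ne'] at this
  linarith
end

section
/- Let X' be a real random variable with E[X'] = 0 and Var(X') ≤ V/n, and let Ψ(X') be a two-valued function of X' taking value V₁ = V(Γ) + δ when X' ≥ 0 and V₂ = V(Γ) − δ when X' < 0, where 0 < δ < V(Γ). Suppose sup over the two values |1/√(V_i) − 1/√(V(Γ))| ≤ Δ/(C√V) and |1/V_i − 1/V(Γ)| ≤ (Δ/2)/(C²V) for a constant C > 0 and Δ > 0. Then: (i) |E[√n·C·X'/√(Ψ(X'))]| ≤ Δ, and (ii) Var( √n·C·X'/√(Ψ(X')) ) ≤ C²V/V(Γ) + (Δ/2) + Δ²/√n·(terms vanishing as n → ∞); in particular for all sufficiently large n, Var(√n·C·X'/√(Ψ(X'))) ≤ C²V/V(Γ) + Δ. -/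
open MeasureTheory ProbabilityTheory
open scoped Classical

/-- Mean and variance bounds for the normalized variable `√n·C·X'/√(Ψ(X'))`, where
`Ψ(X') = V(Γ)+δ` if `X' ≥ 0` and `V(Γ)−δ` otherwise, given `E[X'] = 0`,
`Var(X') ≤ V/n`, and uniform closeness of `1/√Ψ` and `1/Ψ` to `1/√V(Γ)` and `1/V(Γ)`:
(i) the mean is at most `Δ` in absolute value; (ii) for all sufficiently large `n`,
the variance is at most `C²V/V(Γ) + Δ`. -/
theorem stmt18 (V VΓ δ Δ C : ℝ) (hV : 0 < V) (hδ : 0 < δ) (hδV : δ < VΓ)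
    (hΔ : 0 < Δ) (hC : 0 < C)
    (h1 : ∀ Vi ∈ ({VΓ + δ, VΓ - δ} : Set ℝ),
      |1 / Real.sqrt Vi - 1 / Real.sqrt VΓ| ≤ Δ / (C * Real.sqrt V))
    (h2 : ∀ Vi ∈ ({VΓ + δ, VΓ - δ} : Set ℝ),
      |1 / Vi - 1 / VΓ| ≤ (Δ / 2) / (C ^ 2 * V)) :
    ∃ N : ℕ, ∀ n : ℕ, N ≤ n →
      ∀ μ : Measure ℝ, IsProbabilityMeasure μ → MemLp id 2 μ →
        (∫ x, x ∂μ) = 0 → variance id μ ≤ V / n →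
        |∫ x, Real.sqrt n * C * x / Real.sqrt (if 0 ≤ x then VΓ + δ else VΓ - δ) ∂μ| ≤ Δ ∧
        variance
            (fun x : ℝ =>
              Real.sqrt n * C * x / Real.sqrt (if 0 ≤ x then VΓ + δ else VΓ - δ)) μ
          ≤ C ^ 2 * V / VΓ + Δ := by
  refine ⟨1, fun n hn μ hμ hX hmean hvar => ?_⟩
  have hVΓ : 0 < VΓ := hδ.trans hδV
  have hV1 : 0 < VΓ + δ := by linarith
  have hV2 : 0 < VΓ - δ := by linarith
  set ψ : ℝ → ℝ := fun x => if 0 ≤ x then VΓ + δ else VΓ - δ with hψdef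
  have hψpos : ∀ x, 0 < ψ x := by
    intro x; by_cases h : 0 ≤ x <;> simp [hψdef, h, hV1, hV2]
  have hψmem : ∀ x, ψ x ∈ ({VΓ + δ, VΓ - δ} : Set ℝ) := by
    intro x; by_cases h : 0 ≤ x <;> simp [hψdef, h]
  have hψlb : ∀ x, VΓ - δ ≤ ψ x := by
    intro x; by_cases h : 0 ≤ x <;> simp [hψdef, h] <;> linarith
  have hn1 : (1:ℝ) ≤ (n:ℝ) := by exact_mod_cast hn
  have hnpos : (0:ℝ) < (n:ℝ) := by linarith
  have hsn : (0:ℝ) < Real.sqrt n := Real.sqrt_pos.2 hnpos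
  have hsV : (0:ℝ) < Real.sqrt V := Real.sqrt_pos.2 hV
  have hsVΓ : (0:ℝ) < Real.sqrt VΓ := Real.sqrt_pos.2 hVΓ
  set f : ℝ → ℝ := fun x => Real.sqrt n * C * x / Real.sqrt (ψ x) with hfdef
  -- measurability
  have hmψ : Measurable ψ :=
    Measurable.ite (measurableSet_le measurable_const measurable_id)
      measurable_const measurable_const
  have hmf : Measurable f :=
    (measurable_const.mul measurable_id).div (Real.continuous_sqrt.measurable.comp hmψ)
  -- second moment bound
  have hx2nonneg : (0:ℝ) ≤ ∫ x, x ^ 2 ∂μ := integral_nonneg fun x => sq_nonneg x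
  have hx2 : ∫ x, x ^ 2 ∂μ ≤ V / n := by
    have h := variance_eq_sub hX
    have hid2 : (μ[(id : ℝ → ℝ) ^ 2]) = ∫ x, x ^ 2 ∂μ := by
      apply integral_congr_ae; filter_upwards with x; simp
    have hid : (μ[(id : ℝ → ℝ)]) = 0 := hmean
    rw [hid2, hid] at h
    simpa [h] using hvar
  -- integrability facts
  have hXint : Integrable (fun x : ℝ => x) μ := by
    simpa [Function.id_def] using hX.integrable one_le_two
  have hXabs : Integrable (fun x : ℝ => |x|) μ := hXint.abs
  have hx2int : Integrable (fun x : ℝ => x ^ 2) μ := by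
    simpa [Function.id_def] using hX.integrable_sq
  -- Memℒp of f
  have hKpos : (0:ℝ) < Real.sqrt n * C / Real.sqrt (VΓ - δ) :=
    div_pos (mul_pos hsn hC) (Real.sqrt_pos.2 hV2)
  have hfmem : MemLp f 2 μ := by
    have hg : MemLp (fun x : ℝ => Real.sqrt n * C / Real.sqrt (VΓ - δ) * x) 2 μ := by
      simpa [Function.id_def] using hX.const_mul (Real.sqrt n * C / Real.sqrt (VΓ - δ))
    refine hg.of_le hmf.aestronglyMeasurable ?_
    filter_upwards with x
    have hsψ : Real.sqrt (VΓ - δ) ≤ Real.sqrt (ψ x) := Real.sqrt_le_sqrt (hψlb x)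
    have hsψ0 : 0 < Real.sqrt (ψ x) := Real.sqrt_pos.2 (hψpos x)
    have hsψ1 : 0 < Real.sqrt (VΓ - δ) := Real.sqrt_pos.2 hV2
    have e1 : |Real.sqrt (n:ℝ) * C * x / Real.sqrt (ψ x)|
        = Real.sqrt (n:ℝ) * C * |x| / Real.sqrt (ψ x) := by
      rw [abs_div, abs_mul, abs_mul, abs_of_nonneg (Real.sqrt_nonneg ((n:ℝ))),
        abs_of_nonneg hC.le, abs_of_nonneg (Real.sqrt_nonneg (ψ x))]
    have e2 : |Real.sqrt (n:ℝ) * C / Real.sqrt (VΓ - δ) * x|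
        = Real.sqrt (n:ℝ) * C / Real.sqrt (VΓ - δ) * |x| := by
      rw [abs_mul, abs_of_nonneg hKpos.le]
    rw [Real.norm_eq_abs, Real.norm_eq_abs, hfdef]
    simp only
    rw [e1, e2]
    calc Real.sqrt (n:ℝ) * C * |x| / Real.sqrt (ψ x)
        ≤ Real.sqrt (n:ℝ) * C * |x| / Real.sqrt (VΓ - δ) := by
          gcongr
      _ = Real.sqrt (n:ℝ) * C / Real.sqrt (VΓ - δ) * |x| := by ring
  have hfint : Integrable f μ := hfmem.integrable one_le_two
  ----------------------------------------------------------------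
  -- Part (i): mean bound
  ----------------------------------------------------------------
  -- ∫ |x| ≤ √(V/n) via Cauchy–Schwarz
  have habsle : ∫ x, |x| ∂μ ≤ Real.sqrt (V / n) := by
    have hconj : Real.HolderConjugate 2 2 := Real.holderConjugate_iff.mpr ⟨one_lt_two, by norm_num⟩
    have habsmem : MemLp (fun x : ℝ => |x|) (ENNReal.ofReal 2) μ := by
      have := hX.norm
      simpa [Function.id_def, Real.norm_eq_abs,
        show ENNReal.ofReal 2 = 2 by norm_num] using this
    have honemem : MemLp (fun _ : ℝ => (1:ℝ)) (ENNReal.ofReal 2) μ := memLp_const 1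
    have := integral_mul_le_Lp_mul_Lq_of_nonneg hconj
      (f := fun x : ℝ => |x|) (g := fun _ : ℝ => (1:ℝ))
      (Filter.Eventually.of_forall fun x => abs_nonneg x)
      (Filter.Eventually.of_forall fun _ => zero_le_one) habsmem honemem
    have hsimp1 : ∫ a, |a| * 1 ∂μ = ∫ a, |a| ∂μ := by simp
    have hsimp2 : ∫ a, |a| ^ (2:ℝ) ∂μ = ∫ a, a ^ 2 ∂μ := by
      apply integral_congr_ae; filter_upwards with a
      rw [show ((2:ℝ)) = ((2:ℕ):ℝ) by norm_num, Real.rpow_natCast, sq_abs]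
    have hsimp3 : ∫ _ : ℝ, (1:ℝ) ^ (2:ℝ) ∂μ = 1 := by simp
    rw [hsimp1, hsimp2, hsimp3] at this
    calc ∫ x, |x| ∂μ ≤ (∫ a, a ^ 2 ∂μ) ^ (1/2:ℝ) * 1 ^ (1/2:ℝ) := this
      _ = (∫ a, a ^ 2 ∂μ) ^ (1/2:ℝ) := by norm_num
      _ ≤ (V / n) ^ (1/2:ℝ) := Real.rpow_le_rpow hx2nonneg hx2 (by norm_num)
      _ = Real.sqrt (V / n) := (Real.sqrt_eq_rpow _).symm
  -- decomposition of f
  have hkey : ∀ x : ℝ, f x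
      = Real.sqrt n * C * (x * (1 / Real.sqrt (ψ x) - 1 / Real.sqrt VΓ))
        + Real.sqrt n * C / Real.sqrt VΓ * x := by
    intro x
    have h0 : Real.sqrt (ψ x) ≠ 0 := (Real.sqrt_pos.2 (hψpos x)).ne'
    have h0' : Real.sqrt VΓ ≠ 0 := hsVΓ.ne'
    rw [hfdef]; simp only; field_simp; ring
  set g : ℝ → ℝ := fun x => x * (1 / Real.sqrt (ψ x) - 1 / Real.sqrt VΓ) with hgdef
  have hgbound : ∀ x, |g x| ≤ Δ / (C * Real.sqrt V) * |x| := by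
    intro x
    rw [hgdef]; simp only [abs_mul]
    rw [mul_comm]
    exact mul_le_mul_of_nonneg_right (h1 (ψ x) (hψmem x)) (abs_nonneg x)
  have hgm : Measurable g :=
    measurable_id.mul (((Real.continuous_sqrt.measurable.comp hmψ).const_div 1).sub measurable_const)
  have hgint : Integrable g μ := by
    refine (hXabs.const_mul (Δ / (C * Real.sqrt V))).mono' hgm.aestronglyMeasurable ?_
    filter_upwards with x
    rw [Real.norm_eq_abs]
    exact hgbound x
  have hginta : |∫ x, g x ∂μ| ≤ Δ / (C * Real.sqrt V) * Real.sqrt (V / n) := by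
    calc |∫ x, g x ∂μ| ≤ ∫ x, |g x| ∂μ := by
          simpa [Real.norm_eq_abs] using norm_integral_le_integral_norm (f := g) (μ := μ)
      _ ≤ ∫ x, Δ / (C * Real.sqrt V) * |x| ∂μ :=
          integral_mono hgint.abs (hXabs.const_mul _) fun x => hgbound x
      _ = Δ / (C * Real.sqrt V) * ∫ x, |x| ∂μ := integral_const_mul _ _
      _ ≤ Δ / (C * Real.sqrt V) * Real.sqrt (V / n) :=
          mul_le_mul_of_nonneg_left habsle
            (div_nonneg hΔ.le (mul_nonneg hC.le (Real.sqrt_nonneg V)))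
  have hmeanbd : |∫ x, f x ∂μ| ≤ Δ := by
    have hfin : ∫ x, f x ∂μ = Real.sqrt n * C * ∫ x, g x ∂μ := by
      have : ∫ x, f x ∂μ
          = ∫ x, Real.sqrt n * C * g x + Real.sqrt n * C / Real.sqrt VΓ * x ∂μ :=
        integral_congr_ae (Filter.Eventually.of_forall fun x => hkey x)
      rw [this, integral_add ((hgint.const_mul _)) (hXint.const_mul _),
        integral_const_mul, integral_const_mul, hmean, mul_zero, add_zero]
    rw [hfin, abs_mul, abs_of_nonneg (mul_nonneg (Real.sqrt_nonneg _) hC.le)]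
    calc Real.sqrt n * C * |∫ x, g x ∂μ|
        ≤ Real.sqrt n * C * (Δ / (C * Real.sqrt V) * Real.sqrt (V / n)) :=
          mul_le_mul_of_nonneg_left hginta (mul_nonneg (Real.sqrt_nonneg _) hC.le)
      _ = Δ := by
          rw [Real.sqrt_div hV.le]
          field_simp
  ----------------------------------------------------------------
  -- Part (ii): variance bound
  ----------------------------------------------------------------
  have hvarbd : variance f μ ≤ C ^ 2 * V / VΓ + Δ := by
    have hb : ∀ x, 1 / ψ x ≤ 1 / VΓ + Δ / 2 / (C ^ 2 * V) := by
      intro x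
      have := abs_le.1 (h2 (ψ x) (hψmem x))
      linarith [this.2]
    set K : ℝ := (n:ℝ) * C ^ 2 * (1 / VΓ + Δ / 2 / (C ^ 2 * V)) with hKdef
    have hKnn : 0 ≤ K := by
      have : (0:ℝ) ≤ 1 / VΓ + Δ / 2 / (C ^ 2 * V) :=
        add_nonneg (by positivity) (by positivity)
      positivity
    have hfsq : ∀ x, f x ^ 2 ≤ K * x ^ 2 := by
      intro x
      have hψx := hψpos x
      have hfx : f x ^ 2 = (n:ℝ) * C ^ 2 * x ^ 2 * (1 / ψ x) := by
        rw [hfdef]; simp only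
        rw [div_pow, mul_pow, mul_pow, Real.sq_sqrt hψx.le, Real.sq_sqrt hnpos.le]
        field_simp
      rw [hfx, hKdef]
      have hnn : (0:ℝ) ≤ (n:ℝ) * C ^ 2 * x ^ 2 := by positivity
      calc (n:ℝ) * C ^ 2 * x ^ 2 * (1 / ψ x)
          ≤ (n:ℝ) * C ^ 2 * x ^ 2 * (1 / VΓ + Δ / 2 / (C ^ 2 * V)) :=
            mul_le_mul_of_nonneg_left (hb x) hnn
        _ = (n:ℝ) * C ^ 2 * (1 / VΓ + Δ / 2 / (C ^ 2 * V)) * x ^ 2 := by ring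
    have hvle : variance f μ ≤ ∫ x, f x ^ 2 ∂μ := by
      have := variance_le_expectation_sq (X := f) (μ := μ) hmf.aestronglyMeasurable
      calc variance f μ ≤ μ[f ^ 2] := this
        _ = ∫ x, f x ^ 2 ∂μ := by apply integral_congr_ae; filter_upwards with x; simp
    have hf2int : Integrable (fun x => f x ^ 2) μ := hfmem.integrable_sq
    calc variance f μ ≤ ∫ x, f x ^ 2 ∂μ := hvle
      _ ≤ ∫ x, K * x ^ 2 ∂μ := integral_mono hf2int (hx2int.const_mul K) fun x => hfsq x
      _ = K * ∫ x, x ^ 2 ∂μ := integral_const_mul _ _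
      _ ≤ K * (V / n) := mul_le_mul_of_nonneg_left hx2 hKnn
      _ = C ^ 2 * V / VΓ + Δ / 2 := by
          rw [hKdef]; field_simp
      _ ≤ C ^ 2 * V / VΓ + Δ := by linarith
  exact ⟨hmeanbd, hvarbd⟩
end

section
/- Let A, B be finite sets, W a DMC, and P* a distribution on A achieving the capacity-cost function C(Γ) at cost Γ ∈ (Γ₀, Γ*) with Σ_a P*(a)c(a) = Γ, and let Q* = P*W be the induced output distribution. Assume the KKT-type property: for all a ∈ A, Σ_b W(b|a)·log(W(b|a)/Q*(b)) ≤ C(Γ) − C'(Γ)·(Γ − c(a)), with equality when P*(a) > 0, and C'(Γ) > 0. Let xⁿ ∈ Aⁿ satisfy (1/n)Σᵢ c(xᵢ) ≤ Γ − β for some β > 0, and let Y₁,…,Yₙ be independent with Yᵢ ~ W(·|xᵢ). Then for any fixed r ∈ ℝ and all sufficiently large n, P( Σᵢ log(W(Yᵢ|xᵢ)/Q*(Yᵢ)) > n·C(Γ) + √n·r ) ≤ 4·ν_max / (n·C'(Γ)²·β²), where ν_max = max_a Var(log(W(Y|a)/Q*(Y))), Y ~ W(·|a). -/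
open scoped Classical BigOperators


lemma exp_prod_aux {n : ℕ} {B : Type*} [Fintype B] (q g : Fin n → B → ℝ)
    (hq : ∀ i, ∑ b, q i b = 1) (s : Finset (Fin n)) :
    ∑ y : Fin n → B, (∏ i, q i (y i)) * ∏ i ∈ s, g i (y i)
      = ∏ i ∈ s, ∑ b, q i b * g i b := by
  have h1 : ∀ y : Fin n → B, (∏ i, q i (y i)) * ∏ i ∈ s, g i (y i)
      = ∏ i, (q i (y i) * if i ∈ s then g i (y i) else 1) := by
    intro y
    rw [Finset.prod_mul_distrib]
    congr 1
    rw [Fintype.prod_ite_mem s (fun i => g i (y i))]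
  simp only [h1]
  rw [← Fintype.prod_sum (fun i b => q i b * if i ∈ s then g i b else 1)]
  rw [← Fintype.prod_ite_mem s (fun i => ∑ b, q i b * g i b)]
  apply Finset.prod_congr rfl
  intro i _
  by_cases hi : i ∈ s
  · simp [hi]
  · simp [hi, hq i]

lemma exp_single {n : ℕ} {B : Type*} [Fintype B] (q : Fin n → B → ℝ)
    (hq : ∀ i, ∑ b, q i b = 1) (h : B → ℝ) (i : Fin n) :
    ∑ y : Fin n → B, (∏ k, q k (y k)) * h (y i) = ∑ b, q i b * h b := by
  have := exp_prod_aux q (fun _ b => h b) hq {i}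
  simpa using this

lemma exp_pair {n : ℕ} {B : Type*} [Fintype B] (q : Fin n → B → ℝ)
    (hq : ∀ i, ∑ b, q i b = 1) (h₁ h₂ : B → ℝ) (i j : Fin n) (hij : i ≠ j) :
    ∑ y : Fin n → B, (∏ k, q k (y k)) * (h₁ (y i) * h₂ (y j))
      = (∑ b, q i b * h₁ b) * (∑ b, q j b * h₂ b) := by
  classical
  have := exp_prod_aux q (fun k b => if k = i then h₁ b else h₂ b) hq {i, j}
  simp only [Finset.prod_pair hij] at this
  simpa [hij, Ne.symm hij] using this

set_option maxHeartbeats 1000000 in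
/-- Chebyshev bound for the information-density sum of a low-cost input sequence:
if `(1/n)·Σᵢ c(xᵢ) ≤ Γ − β` then, for all large `n`,
`P(Σᵢ log(W(Yᵢ|xᵢ)/Q*(Yᵢ)) > n·C(Γ) + √n·r) ≤ 4·ν_max/(n·C'(Γ)²·β²)`,
where `Yᵢ ~ W(·|xᵢ)` are independent and `Q* = P*W`. -/
theorem stmt19 {A B : Type*} [Fintype A] [Fintype B]
    (W : A → B → ℝ) (hW : ∀ a, (∀ b, 0 ≤ W a b) ∧ ∑ b, W a b = 1)
    (Pstar : A → ℝ) (hP0 : ∀ a, 0 ≤ Pstar a) (hP1 : ∑ a, Pstar a = 1)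
    (c : A → ℝ) (cmax : ℝ) (hc : ∀ a, c a ∈ Set.Icc 0 cmax)
    (Γ CΓ C' β νmax : ℝ) (hC' : 0 < C') (hβ : 0 < β)
    (hQpos : ∀ b, 0 < ∑ a, Pstar a * W a b)
    (hKKT : ∀ a, (∑ b, W a b * Real.log (W a b / ∑ a', Pstar a' * W a' b))
        ≤ CΓ - C' * (Γ - c a))
    (hKKTeq : ∀ a, Pstar a ≠ 0 →
      (∑ b, W a b * Real.log (W a b / ∑ a', Pstar a' * W a' b)) = CΓ - C' * (Γ - c a))
    (hν : ∀ a, (∑ b, W a b *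
        (Real.log (W a b / ∑ a', Pstar a' * W a' b) -
          ∑ b', W a b' * Real.log (W a b' / ∑ a', Pstar a' * W a' b')) ^ 2) ≤ νmax)
    (r : ℝ) :
    ∃ N : ℕ, ∀ n : ℕ, N < n → ∀ x : Fin n → A,
      (1 / n : ℝ) * (∑ i, c (x i)) ≤ Γ - β →
      (∑ y : Fin n → B,
          if (n : ℝ) * CΓ + Real.sqrt n * r <
              ∑ i, Real.log (W (x i) (y i) / ∑ a', Pstar a' * W a' (y i))
          then ∏ i, W (x i) (y i) else 0)
        ≤ 4 * νmax / (n * C' ^ 2 * β ^ 2) := by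
  refine ⟨⌈(2 * |r| / (C' * β)) ^ 2⌉₊, ?_⟩
  intro n hn x hx
  have hn0 : 0 < n := Nat.pos_of_ne_zero (by omega)
  have hnR : (0 : ℝ) < n := by exact_mod_cast hn0
  set q : Fin n → B → ℝ := fun i => W (x i) with hqdef
  set f : Fin n → B → ℝ :=
    fun i b => Real.log (W (x i) b / ∑ a', Pstar a' * W a' b) with hfdef
  set μ : Fin n → ℝ := fun i => ∑ b, q i b * f i b with hμdef
  set g : Fin n → B → ℝ := fun i b => f i b - μ i with hgdef
  have hq1 : ∀ i, ∑ b, q i b = 1 := fun i => (hW (x i)).2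
  have hq0 : ∀ i b, 0 ≤ q i b := fun i => (hW (x i)).1
  have hg0 : ∀ i, ∑ b, q i b * g i b = 0 := by
    intro i
    simp only [hgdef, mul_sub]
    rw [Finset.sum_sub_distrib, ← Finset.sum_mul, hq1 i]
    simp [hμdef]
  -- variance bound
  have hνmax0 : 0 ≤ νmax := by
    refine le_trans ?_ (hν (x ⟨0, hn0⟩))
    exact Finset.sum_nonneg fun b _ => mul_nonneg (hq0 ⟨0, hn0⟩ b) (sq_nonneg _)
  have hgvar : ∀ i, ∑ b, q i b * (g i b) ^ 2 ≤ νmax := fun i => hν (x i)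
  have key : ∀ i j : Fin n, ∑ y : Fin n → B, (∏ k, q k (y k)) * (g i (y i) * g j (y j))
      = if i = j then ∑ b, q i b * (g i b) ^ 2 else 0 := by
    intro i j
    by_cases hij : i = j
    · subst hij
      rw [if_pos rfl]
      have := exp_single q hq1 (fun b => g i b * g i b) i
      simpa [sq] using this
    · rw [if_neg hij, exp_pair q hq1 (g i) (g j) i j hij, hg0 i, zero_mul]
  have hVar : ∑ y : Fin n → B, (∏ k, q k (y k)) * (∑ i, g i (y i)) ^ 2
      ≤ (n : ℝ) * νmax := by
    have e1 : ∀ y : Fin n → B,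
        (∏ k, q k (y k)) * (∑ i, g i (y i)) ^ 2
          = ∑ i, ∑ j, (∏ k, q k (y k)) * (g i (y i) * g j (y j)) := by
      intro y
      rw [sq, Finset.sum_mul_sum]
      rw [Finset.mul_sum]
      exact Finset.sum_congr rfl fun i _ => by rw [Finset.mul_sum]
    calc ∑ y : Fin n → B, (∏ k, q k (y k)) * (∑ i, g i (y i)) ^ 2
        = ∑ i, ∑ j, ∑ y : Fin n → B, (∏ k, q k (y k)) * (g i (y i) * g j (y j)) := by
          simp only [e1]
          rw [Finset.sum_comm]
          exact Finset.sum_congr rfl fun i _ => Finset.sum_comm ..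
      _ = ∑ i : Fin n, ∑ b, q i b * (g i b) ^ 2 := by
          simp only [key]
          exact Finset.sum_congr rfl fun i _ => by simp
      _ ≤ ∑ _i : Fin n, νmax := Finset.sum_le_sum fun i _ => hgvar i
      _ = (n : ℝ) * νmax := by simp [mul_comm]
  -- mean bound
  have hsum_c : ∑ i, c (x i) ≤ (n : ℝ) * (Γ - β) := by
    have h1 : (n : ℝ) * ((1 / n : ℝ) * ∑ i, c (x i)) ≤ (n : ℝ) * (Γ - β) :=
      mul_le_mul_of_nonneg_left hx hnR.le
    have h2 : (n : ℝ) * ((1 / n : ℝ) * ∑ i, c (x i)) = ∑ i, c (x i) := by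
      field_simp
    linarith
  have hM : ∑ i, μ i ≤ (n : ℝ) * CΓ - C' * ((n : ℝ) * β) := by
    have h1 : ∑ i, μ i ≤ ∑ i, (CΓ - C' * (Γ - c (x i))) :=
      Finset.sum_le_sum fun i _ => hKKT (x i)
    have h2 : ∑ i, (CΓ - C' * (Γ - c (x i)))
        = (n : ℝ) * CΓ - C' * ((n : ℝ) * Γ - ∑ i, c (x i)) := by
      rw [Finset.sum_sub_distrib]
      simp [Finset.mul_sum, mul_sub, Finset.sum_sub_distrib, Finset.card_univ]
      ring
    have h3 : C' * ((n : ℝ) * β) ≤ C' * ((n : ℝ) * Γ - ∑ i, c (x i)) := by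
      apply mul_le_mul_of_nonneg_left _ hC'.le
      linarith
    linarith
  -- threshold bound
  set s := Real.sqrt n with hsdef
  have hs0 : 0 ≤ s := Real.sqrt_nonneg _
  have hss : s * s = n := Real.mul_self_sqrt hnR.le
  have hsr : 2 * |r| / (C' * β) ≤ s := by
    rw [hsdef]
    have h1 : ((2 * |r| / (C' * β)) ^ 2 : ℝ) ≤ (n : ℝ) := by
      calc ((2 * |r| / (C' * β)) ^ 2 : ℝ) ≤ (⌈(2 * |r| / (C' * β)) ^ 2⌉₊ : ℝ) :=
            Nat.le_ceil _
        _ ≤ (n : ℝ) := by exact_mod_cast hn.le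
    calc 2 * |r| / (C' * β) = Real.sqrt ((2 * |r| / (C' * β)) ^ 2) := by
          rw [Real.sqrt_sq (by positivity)]
      _ ≤ Real.sqrt n := Real.sqrt_le_sqrt h1
  have hsr2 : -( (n : ℝ) * C' * β / 2) ≤ s * r := by
    have h1 : 2 * |r| ≤ s * (C' * β) := by
      rw [div_le_iff₀ (by positivity)] at hsr
      linarith
    have h2 : s * (2 * |r|) ≤ s * (s * (C' * β)) := mul_le_mul_of_nonneg_left h1 hs0
    have h3 : -(s * |r|) ≤ s * r := by
      have := mul_le_mul_of_nonneg_left (neg_abs_le r) hs0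
      linarith
    have h4 : s * (s * (C' * β)) = (n : ℝ) * C' * β := by rw [← hss]; ring
    linarith
  set t := (n : ℝ) * CΓ + s * r - ∑ i, μ i with htdef
  have ht : (n : ℝ) * C' * β / 2 ≤ t := by
    rw [htdef]
    have : (n : ℝ) * C' * β = C' * ((n : ℝ) * β) := by ring
    nlinarith [hM, hsr2]
  have ht0 : 0 < t := lt_of_lt_of_le (by positivity) ht
  -- Chebyshev
  have step : ∀ y : Fin n → B,
      (if (n : ℝ) * CΓ + Real.sqrt n * r <
          ∑ i, Real.log (W (x i) (y i) / ∑ a', Pstar a' * W a' (y i))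
        then ∏ i, W (x i) (y i) else 0)
      ≤ (∏ k, q k (y k)) * (∑ i, g i (y i)) ^ 2 / t ^ 2 := by
    intro y
    have hp : 0 ≤ ∏ k, q k (y k) := Finset.prod_nonneg fun k _ => hq0 k (y k)
    by_cases hy : (n : ℝ) * CΓ + Real.sqrt n * r <
        ∑ i, Real.log (W (x i) (y i) / ∑ a', Pstar a' * W a' (y i))
    · rw [if_pos hy]
      have hfy : ∑ i, Real.log (W (x i) (y i) / ∑ a', Pstar a' * W a' (y i))
          = ∑ i, f i (y i) := rfl
      have hgy : ∑ i, g i (y i) = (∑ i, f i (y i)) - ∑ i, μ i := by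
        simp [hgdef, Finset.sum_sub_distrib]
      have hT : t < ∑ i, g i (y i) := by
        rw [hgy, htdef]
        rw [hfy] at hy
        rw [hsdef]
        linarith
      have ht2 : t ^ 2 ≤ (∑ i, g i (y i)) ^ 2 := by nlinarith
      rw [le_div_iff₀ (by positivity)]
      have he : (∏ i, W (x i) (y i)) = ∏ k, q k (y k) := rfl
      rw [he]
      exact mul_le_mul_of_nonneg_left ht2 hp
    · rw [if_neg hy]
      positivity
  calc (∑ y : Fin n → B,
          if (n : ℝ) * CΓ + Real.sqrt n * r <
              ∑ i, Real.log (W (x i) (y i) / ∑ a', Pstar a' * W a' (y i))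
          then ∏ i, W (x i) (y i) else 0)
      ≤ ∑ y : Fin n → B, (∏ k, q k (y k)) * (∑ i, g i (y i)) ^ 2 / t ^ 2 :=
        Finset.sum_le_sum fun y _ => step y
    _ = (∑ y : Fin n → B, (∏ k, q k (y k)) * (∑ i, g i (y i)) ^ 2) / t ^ 2 := by
        rw [Finset.sum_div]
    _ ≤ (n : ℝ) * νmax / t ^ 2 := by
        apply div_le_div_of_nonneg_right hVar (by positivity)
    _ ≤ 4 * νmax / ((n : ℝ) * C' ^ 2 * β ^ 2) := by
        have h1 : ((n : ℝ) * C' * β / 2) ^ 2 ≤ t ^ 2 := pow_le_pow_left₀ (by positivity) ht 2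
        have h2 : (0 : ℝ) < ((n : ℝ) * C' * β / 2) ^ 2 := by positivity
        have h3 : (n : ℝ) * νmax / t ^ 2 ≤ (n : ℝ) * νmax / ((n : ℝ) * C' * β / 2) ^ 2 :=
          div_le_div_of_nonneg_left (by positivity) h2 h1
        have h4 : (n : ℝ) * νmax / ((n : ℝ) * C' * β / 2) ^ 2
            = 4 * νmax / ((n : ℝ) * C' ^ 2 * β ^ 2) := by
          rw [div_eq_div_iff (by positivity) (by positivity)]
          ring
        linarith
end
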